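/- (Accessible Section Theorem) Let (Ω, F, ℙ) be a probability space with a filtration (F_t)_{t∈ℝ₊} satisfying ⋁_t F_t ⊆ F. For every set A in the accessible σ-algebra 𝒜 and every ε > 0 there exists an accessible time τ such that the graph ⟦τ⟧ is contained in A and ℙ*(π_Ω(A)) − ℙ({τ < ∞}) ≤ ε. -/

import Mathlib

open MeasureTheory Set
open scoped NNReal ENNReal


variable {Ω : Type*}

/-- A stopping time with respect to the filtration `𝔽`. -/
def IsStopTime {F : MeasurableSpace Ω} (𝔽 : Filtration ℝ≥0 F) (τ : Ω → ℝ≥0∞) : Prop :=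
  ∀ t : ℝ≥0, MeasurableSet[𝔽 t] {ω | τ ω ≤ (t : ℝ≥0∞)}

/-- A predictable time: a stopping time announced by a nondecreasing sequence of
finite stopping times. -/
def IsPredTime {F : MeasurableSpace Ω} (𝔽 : Filtration ℝ≥0 F) (ρ : Ω → ℝ≥0∞) : Prop :=
  IsStopTime 𝔽 ρ ∧ ∃ ρs : ℕ → Ω → ℝ≥0∞,
    (∀ n, IsStopTime 𝔽 (ρs n)) ∧ (∀ n ω, ρs n ω < ⊤) ∧ (∀ n ω, ρs n ω ≤ ρ ω) ∧
    (∀ n ω, 0 < ρ ω → ρs n ω < ρ ω) ∧ (∀ ω, Monotone fun n => ρs n ω) ∧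
    (∀ ω, Filter.Tendsto (fun n => ρs n ω) Filter.atTop (nhds (ρ ω)))

/-- The graph `⟦τ⟧ ⊆ Ω × ℝ₊` of `τ : Ω → [0,∞]`. -/
def graph (τ : Ω → ℝ≥0∞) : Set (Ω × ℝ≥0) := {p | τ p.1 = (p.2 : ℝ≥0∞)}

/-- The stochastic interval `⟦τ, ∞⟦`. -/
def rayFrom (τ : Ω → ℝ≥0∞) : Set (Ω × ℝ≥0) := {p | τ p.1 ≤ (p.2 : ℝ≥0∞)}

/-- The stochastic interval `⟦ρ, τ⟧`. -/
def stInterval (ρ τ : Ω → ℝ≥0∞) : Set (Ω × ℝ≥0) :=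
  {p | ρ p.1 ≤ (p.2 : ℝ≥0∞) ∧ (p.2 : ℝ≥0∞) ≤ τ p.1}

/-- The predictable σ-algebra on `Ω × ℝ₊`. -/
def predictableSigma {F : MeasurableSpace Ω} (𝔽 : Filtration ℝ≥0 F) :
    MeasurableSpace (Ω × ℝ≥0) :=
  MeasurableSpace.generateFrom {s | ∃ ρ, IsPredTime 𝔽 ρ ∧ s = rayFrom ρ}

/-- The optional σ-algebra on `Ω × ℝ₊`. -/
def optionalSigma {F : MeasurableSpace Ω} (𝔽 : Filtration ℝ≥0 F) :
    MeasurableSpace (Ω × ℝ≥0) :=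
  MeasurableSpace.generateFrom {s | ∃ τ, IsStopTime 𝔽 τ ∧ s = rayFrom τ}

/-- The debut of a set `S ⊆ Ω × ℝ₊`. -/
noncomputable def debut (S : Set (Ω × ℝ≥0)) (ω : Ω) : ℝ≥0∞ :=
  ⨅ (t : ℝ≥0) (_ : (ω, t) ∈ S), (t : ℝ≥0∞)

/-- Projection of a subset of `Ω × ℝ₊` onto `Ω`. -/
def projOmega (S : Set (Ω × ℝ≥0)) : Set Ω := Prod.fst '' S

/-- The outer measure `ℙ*` induced by `ℙ`. -/
noncomputable def pstar {F : MeasurableSpace Ω} (P : Measure Ω) (A : Set Ω) : ℝ≥0∞ :=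
  ⨅ (E : Set Ω) (_ : A ⊆ E) (_ : MeasurableSet E), P E

/-- An accessible stopping time: its graph is covered by countably many graphs of
predictable times. -/
def IsAccessibleTime {Ω : Type*} {F : MeasurableSpace Ω} (𝔽 : Filtration ℝ≥0 F)
    (τ : Ω → ℝ≥0∞) : Prop :=
  IsStopTime 𝔽 τ ∧ ∃ ρs : ℕ → Ω → ℝ≥0∞,
    (∀ m, IsPredTime 𝔽 (ρs m)) ∧ graph τ ⊆ ⋃ m, graph (ρs m)

/-- The accessible σ-algebra on `Ω × ℝ₊`. -/
def accessibleSigma {Ω : Type*} {F : MeasurableSpace Ω} (𝔽 : Filtration ℝ≥0 F) :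
    MeasurableSpace (Ω × ℝ≥0) :=
  MeasurableSpace.generateFrom {s | ∃ τ, IsAccessibleTime 𝔽 τ ∧ s = rayFrom τ}


open scoped Classical

namespace AST

variable {F : MeasurableSpace Ω} {𝔽 : Filtration ℝ≥0 F} {σ τ : Ω → ℝ≥0∞}

/-! ### Basic stopping time lemmas -/

lemma isStop_top : IsStopTime 𝔽 (fun _ => (⊤ : ℝ≥0∞)) := by
  intro t
  have : {ω : Ω | (⊤:ℝ≥0∞) ≤ (t:ℝ≥0∞)} = ∅ := by
    ext ω; simp [(ENNReal.coe_lt_top (r := t)).not_ge]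
  rw [this]; exact @MeasurableSet.empty _ (𝔽 t)

lemma isStop_zero : IsStopTime 𝔽 (fun _ => (0 : ℝ≥0∞)) := by
  intro t
  have : {ω : Ω | (0:ℝ≥0∞) ≤ (t:ℝ≥0∞)} = univ := by ext ω; simp
  rw [this]; exact @MeasurableSet.univ _ (𝔽 t)

lemma isStop_min (hσ : IsStopTime 𝔽 σ) (hτ : IsStopTime 𝔽 τ) :
    IsStopTime 𝔽 (fun ω => σ ω ⊓ τ ω) := by
  intro t
  have : {ω | σ ω ⊓ τ ω ≤ (t:ℝ≥0∞)} = {ω | σ ω ≤ (t:ℝ≥0∞)} ∪ {ω | τ ω ≤ (t:ℝ≥0∞)} := by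
    ext ω; simp [inf_le_iff]
  rw [this]; exact (hσ t).union (hτ t)

lemma isStop_max (hσ : IsStopTime 𝔽 σ) (hτ : IsStopTime 𝔽 τ) :
    IsStopTime 𝔽 (fun ω => σ ω ⊔ τ ω) := by
  intro t
  have : {ω | σ ω ⊔ τ ω ≤ (t:ℝ≥0∞)} = {ω | σ ω ≤ (t:ℝ≥0∞)} ∩ {ω | τ ω ≤ (t:ℝ≥0∞)} := by
    ext ω; simp [sup_le_iff]
  rw [this]; exact (hσ t).inter (hτ t)

lemma isStop_iSup {ι : Sort*} [Countable ι] {f : ι → Ω → ℝ≥0∞}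
    (hf : ∀ i, IsStopTime 𝔽 (f i)) : IsStopTime 𝔽 (fun ω => ⨆ i, f i ω) := by
  intro t
  have : {ω | (⨆ i, f i ω) ≤ (t:ℝ≥0∞)} = ⋂ i, {ω | f i ω ≤ (t:ℝ≥0∞)} := by
    ext ω; simp [iSup_le_iff]
  rw [this]; exact MeasurableSet.iInter fun i => hf i t

lemma measMinConst (hσ : IsStopTime 𝔽 σ) (t : ℝ≥0) :
    Measurable[𝔽 t] (fun ω => σ ω ⊓ (t:ℝ≥0∞)) := by
  apply measurable_of_Iic
  intro x
  by_cases h : (t:ℝ≥0∞) ≤ x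
  · have : (fun ω => σ ω ⊓ (t:ℝ≥0∞)) ⁻¹' Iic x = univ := by
      ext ω; simp only [mem_preimage, mem_Iic, mem_univ, iff_true]
      exact le_trans inf_le_right h
    rw [this]; exact @MeasurableSet.univ _ (𝔽 t)
  · push_neg at h
    have hx : x ≠ ⊤ := by
      intro hx; rw [hx] at h; exact (not_le.2 h) le_top
    have : (fun ω => σ ω ⊓ (t:ℝ≥0∞)) ⁻¹' Iic x = {ω | σ ω ≤ ((x.toNNReal : ℝ≥0) : ℝ≥0∞)} := by
      ext ω
      simp only [mem_preimage, mem_Iic, mem_setOf_eq, ENNReal.coe_toNNReal hx, inf_le_iff]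
      constructor
      · rintro (h1 | h1)
        · exact h1
        · exact absurd h1 (not_le.2 h)
      · exact Or.inl
    rw [this]
    have hxt : x.toNNReal ≤ t := by
      rw [← ENNReal.coe_le_coe, ENNReal.coe_toNNReal hx]; exact h.le
    exact 𝔽.mono hxt _ (hσ x.toNNReal)

lemma IsStopTime.measurableSet_le_const (hσ : IsStopTime 𝔽 σ) {s t : ℝ≥0} (hst : s ≤ t) :
    MeasurableSet[𝔽 t] {ω | σ ω ≤ (s:ℝ≥0∞)} := 𝔽.mono hst _ (hσ s)

/-- `{σ ≤ t} ∩ {σ ≤ τ} ∈ 𝔽 t`. -/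
lemma meas_le_and_le (hσ : IsStopTime 𝔽 σ) (hτ : IsStopTime 𝔽 τ) (t : ℝ≥0) :
    MeasurableSet[𝔽 t] {ω | σ ω ≤ (t:ℝ≥0∞) ∧ σ ω ≤ τ ω} := by
  have h1 : {ω | σ ω ≤ (t:ℝ≥0∞) ∧ σ ω ≤ τ ω}
      = {ω | σ ω ≤ (t:ℝ≥0∞)} ∩ {ω | σ ω ⊓ (t:ℝ≥0∞) ≤ τ ω ⊓ (t:ℝ≥0∞)} := by
    ext ω
    simp only [mem_setOf_eq, mem_inter_iff]
    constructor
    · rintro ⟨h1, h2⟩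
      exact ⟨h1, inf_le_inf_right _ h2⟩
    · rintro ⟨h1, h2⟩
      refine ⟨h1, ?_⟩
      rcases le_total (τ ω) (t:ℝ≥0∞) with h3 | h3
      · have := h2.trans inf_le_left
        rwa [inf_eq_left.2 h1] at this
      · exact h1.trans h3
  rw [h1]
  exact (hσ t).inter (measurableSet_le (measMinConst hσ t) (measMinConst hτ t))

/-- `{σ ≤ t} ∩ {τ ≤ σ} ∈ 𝔽 t`. -/
lemma meas_le_and_ge (hσ : IsStopTime 𝔽 σ) (hτ : IsStopTime 𝔽 τ) (t : ℝ≥0) :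
    MeasurableSet[𝔽 t] {ω | σ ω ≤ (t:ℝ≥0∞) ∧ τ ω ≤ σ ω} := by
  have h1 : {ω | σ ω ≤ (t:ℝ≥0∞) ∧ τ ω ≤ σ ω}
      = {ω | τ ω ≤ (t:ℝ≥0∞) ∧ τ ω ≤ σ ω} ∩ {ω | σ ω ≤ (t:ℝ≥0∞)} := by
    ext ω
    simp only [mem_setOf_eq, mem_inter_iff]
    exact ⟨fun ⟨h1, h2⟩ => ⟨⟨h2.trans h1, h2⟩, h1⟩, fun ⟨⟨_, h2⟩, h3⟩ => ⟨h3, h2⟩⟩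
  rw [h1]
  exact (meas_le_and_le hτ hσ t).inter (hσ t)

/-- `{σ ≤ t} ∩ {σ = τ} ∈ 𝔽 t`. -/
lemma meas_le_and_eq (hσ : IsStopTime 𝔽 σ) (hτ : IsStopTime 𝔽 τ) (t : ℝ≥0) :
    MeasurableSet[𝔽 t] {ω | σ ω ≤ (t:ℝ≥0∞) ∧ σ ω = τ ω} := by
  have h1 : {ω | σ ω ≤ (t:ℝ≥0∞) ∧ σ ω = τ ω}
      = {ω | σ ω ≤ (t:ℝ≥0∞) ∧ σ ω ≤ τ ω} ∩ {ω | σ ω ≤ (t:ℝ≥0∞) ∧ τ ω ≤ σ ω} := by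
    ext ω
    simp only [mem_setOf_eq, mem_inter_iff]
    constructor
    · rintro ⟨h1, h2⟩; exact ⟨⟨h1, h2.le⟩, ⟨h1, h2.ge⟩⟩
    · rintro ⟨⟨h1, h2⟩, ⟨_, h4⟩⟩; exact ⟨h1, le_antisymm h2 h4⟩
  rw [h1]
  exact (meas_le_and_le hσ hτ t).inter (meas_le_and_ge hσ hτ t)

/-- `{σ ≤ t} ∩ {σ < τ} ∈ 𝔽 t`. -/
lemma meas_le_and_lt (hσ : IsStopTime 𝔽 σ) (hτ : IsStopTime 𝔽 τ) (t : ℝ≥0) :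
    MeasurableSet[𝔽 t] {ω | σ ω ≤ (t:ℝ≥0∞) ∧ σ ω < τ ω} := by
  have h1 : {ω | σ ω ≤ (t:ℝ≥0∞) ∧ σ ω < τ ω}
      = ({ω | σ ω ≤ (t:ℝ≥0∞)} ∩ {ω | τ ω ≤ (t:ℝ≥0∞)}ᶜ)
        ∪ ({ω | τ ω ≤ (t:ℝ≥0∞)} ∩ {ω | σ ω ⊓ (t:ℝ≥0∞) < τ ω ⊓ (t:ℝ≥0∞)}) := by
    ext ω
    simp only [mem_setOf_eq, mem_inter_iff, mem_union, mem_compl_iff]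
    constructor
    · rintro ⟨h1, h2⟩
      by_cases h3 : τ ω ≤ (t:ℝ≥0∞)
      · refine Or.inr ⟨h3, ?_⟩
        rwa [inf_eq_left.2 h1, inf_eq_left.2 h3]
      · exact Or.inl ⟨h1, h3⟩
    · rintro (⟨h1, h2⟩ | ⟨h1, h2⟩)
      · exact ⟨h1, lt_of_le_of_lt h1 (not_le.1 h2)⟩
      · have hσt : σ ω ≤ (t:ℝ≥0∞) := by
          by_contra h3
          push_neg at h3
          rw [inf_eq_right.2 h3.le, inf_eq_left.2 h1] at h2
          exact absurd h1 (not_le.2 h2)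
        rw [inf_eq_left.2 hσt, inf_eq_left.2 h1] at h2
        exact ⟨hσt, h2⟩
  rw [h1]
  exact (((hσ t).inter (hτ t).compl)).union
    ((hτ t).inter (measurableSet_lt (measMinConst hσ t) (measMinConst hτ t)))

/-! ### Restriction of a time to an event -/

noncomputable def res (σ : Ω → ℝ≥0∞) (B : Set Ω) : Ω → ℝ≥0∞ :=
  fun ω => if ω ∈ B then σ ω else ⊤

lemma res_le_iff {B : Set Ω} {ω : Ω} {t : ℝ≥0} :
    res σ B ω ≤ (t:ℝ≥0∞) ↔ σ ω ≤ (t:ℝ≥0∞) ∧ ω ∈ B := by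
  unfold res
  by_cases h : ω ∈ B <;> simp [h, (ENNReal.coe_lt_top (r := t)).not_ge]

lemma isStop_res (hσ : IsStopTime 𝔽 σ) {B : Set Ω}
    (hB : ∀ t : ℝ≥0, MeasurableSet[𝔽 t] {ω | σ ω ≤ (t:ℝ≥0∞) ∧ ω ∈ B}) :
    IsStopTime 𝔽 (res σ B) := by
  intro t
  have : {ω | res σ B ω ≤ (t:ℝ≥0∞)} = {ω | σ ω ≤ (t:ℝ≥0∞) ∧ ω ∈ B} := by
    ext ω; exact res_le_iff
  rw [this]; exact hB t

lemma graph_res_subset {B : Set Ω} : graph (res σ B) ⊆ graph σ := by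
  rintro ⟨ω, s⟩ h
  simp only [graph, mem_setOf_eq, res] at h ⊢
  by_cases hb : ω ∈ B
  · rwa [if_pos hb] at h
  · rw [if_neg hb] at h
    exact absurd h.symm (ENNReal.coe_lt_top (r := s)).ne

lemma res_lt_top_imp {B : Set Ω} {ω : Ω} (h : res σ B ω < ⊤) : ω ∈ B ∧ σ ω = res σ B ω := by
  unfold res at *
  by_cases hb : ω ∈ B
  · exact ⟨hb, by rw [if_pos hb]⟩
  · rw [if_neg hb] at h; exact absurd h (lt_irrefl _)



lemma isStop_const (c : ℝ≥0∞) : IsStopTime 𝔽 (fun _ => c) := by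
  intro t
  by_cases h : c ≤ (t:ℝ≥0∞)
  · have : {ω : Ω | c ≤ (t:ℝ≥0∞)} = univ := by ext ω; simp [h]
    rw [this]; exact @MeasurableSet.univ _ (𝔽 t)
  · have : {ω : Ω | c ≤ (t:ℝ≥0∞)} = ∅ := by ext ω; simp [h]
    rw [this]; exact @MeasurableSet.empty _ (𝔽 t)

lemma meas_le_and_gt {σ τ : Ω → ℝ≥0∞} (hσ : IsStopTime 𝔽 σ) (hτ : IsStopTime 𝔽 τ) (t : ℝ≥0) :
    MeasurableSet[𝔽 t] {ω | σ ω ≤ (t:ℝ≥0∞) ∧ τ ω < σ ω} := by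
  have h1 : {ω | σ ω ≤ (t:ℝ≥0∞) ∧ τ ω < σ ω}
      = {ω | σ ω ≤ (t:ℝ≥0∞)} \ {ω | σ ω ≤ (t:ℝ≥0∞) ∧ σ ω ≤ τ ω} := by
    ext ω
    simp only [mem_setOf_eq, mem_diff, not_and, not_le]
    constructor
    · rintro ⟨h1, h2⟩; exact ⟨h1, fun _ => h2⟩
    · rintro ⟨h1, h2⟩; exact ⟨h1, h2 h1⟩
  rw [h1]
  exact (hσ t).diff (meas_le_and_le hσ hτ t)

lemma isPred_zero : IsPredTime 𝔽 (fun _ => (0:ℝ≥0∞)) := by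
  refine ⟨isStop_zero, fun _ _ => 0, fun n => isStop_zero, ?_, ?_, ?_, ?_, ?_⟩
  · intro n ω; simp
  · intro n ω; simp
  · intro n ω h; exact absurd h (lt_irrefl _)
  · intro ω; exact monotone_const
  · intro ω; exact tendsto_const_nhds

lemma isAcc_of_pred {ρ : Ω → ℝ≥0∞} (hρ : IsPredTime 𝔽 ρ) : IsAccessibleTime 𝔽 ρ :=
  ⟨hρ.1, fun _ => ρ, fun _ => hρ, by intro x hx; exact mem_iUnion.2 ⟨0, hx⟩⟩

lemma isAcc_of_graph_subset {σ : Ω → ℝ≥0∞} (hσ : IsStopTime 𝔽 σ)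
    (f : ℕ → Ω → ℝ≥0∞) (hf : ∀ i, IsAccessibleTime 𝔽 (f i))
    (h : graph σ ⊆ ⋃ i, graph (f i)) : IsAccessibleTime 𝔽 σ := by
  have h' : ∀ i, ∃ ρs : ℕ → Ω → ℝ≥0∞,
      (∀ m, IsPredTime 𝔽 (ρs m)) ∧ graph (f i) ⊆ ⋃ m, graph (ρs m) := fun i => (hf i).2
  choose cov hcov1 hcov2 using h'
  refine ⟨hσ, fun n => cov n.unpair.1 n.unpair.2, fun n => hcov1 _ _, ?_⟩
  intro x hx
  rcases mem_iUnion.1 (h hx) with ⟨i, hi⟩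
  rcases mem_iUnion.1 (hcov2 i hi) with ⟨m, hm⟩
  refine mem_iUnion.2 ⟨Nat.pair i m, ?_⟩
  simpa only [Nat.unpair_pair] using hm

lemma isAcc_of_graph_subset_one {σ lam : Ω → ℝ≥0∞} (hσ : IsStopTime 𝔽 σ)
    (hlam : IsAccessibleTime 𝔽 lam) (h : graph σ ⊆ graph lam) : IsAccessibleTime 𝔽 σ := by
  refine isAcc_of_graph_subset hσ (fun _ => lam) (fun _ => hlam) ?_
  intro x hx; exact mem_iUnion.2 ⟨0, h hx⟩

lemma isAcc_max {σ τ : Ω → ℝ≥0∞} (hσ : IsAccessibleTime 𝔽 σ) (hτ : IsAccessibleTime 𝔽 τ) :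
    IsAccessibleTime 𝔽 (fun ω => σ ω ⊔ τ ω) := by
  refine isAcc_of_graph_subset (isStop_max hσ.1 hτ.1)
    (fun i => if i = 0 then σ else τ) (fun i => by by_cases h : i = 0 <;> simp [h, hσ, hτ]) ?_
  rintro ⟨ω, s⟩ hx
  simp only [graph, mem_setOf_eq] at hx
  rcases max_choice (σ ω) (τ ω) with h | h
  · exact mem_iUnion.2 ⟨0, by simp [graph, ← hx, h]⟩
  · exact mem_iUnion.2 ⟨1, by simp [graph, ← hx, h]⟩

lemma isAcc_min {σ τ : Ω → ℝ≥0∞} (hσ : IsAccessibleTime 𝔽 σ) (hτ : IsAccessibleTime 𝔽 τ) :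
    IsAccessibleTime 𝔽 (fun ω => σ ω ⊓ τ ω) := by
  refine isAcc_of_graph_subset (isStop_min hσ.1 hτ.1)
    (fun i => if i = 0 then σ else τ) (fun i => by by_cases h : i = 0 <;> simp [h, hσ, hτ]) ?_
  rintro ⟨ω, s⟩ hx
  simp only [graph, mem_setOf_eq] at hx
  rcases min_choice (σ ω) (τ ω) with h | h
  · exact mem_iUnion.2 ⟨0, by simp [graph, ← hx, h]⟩
  · exact mem_iUnion.2 ⟨1, by simp [graph, ← hx, h]⟩

/-- Key lemma: the pointwise supremum of a monotone sequence of accessible times is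
accessible. -/
lemma isAcc_iSup (d : ℕ → Ω → ℝ≥0∞) (hd : ∀ n, IsAccessibleTime 𝔽 (d n))
    (hmono : ∀ ω, Monotone fun n => d n ω) :
    IsAccessibleTime 𝔽 (fun ω => ⨆ n, d n ω) := by
  set D : Ω → ℝ≥0∞ := fun ω => ⨆ n, d n ω with hD
  have hDstop : IsStopTime 𝔽 D := isStop_iSup (fun n => (hd n).1)
  have hdleD : ∀ n ω, d n ω ≤ D ω := fun n ω => le_iSup (fun n => d n ω) n
  set B : Set Ω := {ω | ∀ n, d n ω < D ω} with hB
  -- the restriction of D to B is a predictable time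
  set X : ℕ → Ω → ℝ≥0∞ := fun k => res (d k) {ω | d k ω < D ω} with hX
  have hXstop : ∀ k, IsStopTime 𝔽 (X k) := by
    intro k
    exact isStop_res (hd k).1 (fun t => meas_le_and_lt (hd k).1 hDstop t)
  have hXval : ∀ k ω, d k ω < D ω → X k ω = d k ω := by
    intro k ω h; simp only [hX, res, mem_setOf_eq, if_pos h]
  have hXtop : ∀ k ω, ¬ (d k ω < D ω) → X k ω = ⊤ := by
    intro k ω h; simp only [hX, res, mem_setOf_eq, if_neg h]
  have hXmono : ∀ ω, Monotone fun k => X k ω := by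
    intro ω
    apply monotone_nat_of_le_succ
    intro k
    by_cases h1 : d (k+1) ω < D ω
    · rw [hXval _ _ h1]
      by_cases h0 : d k ω < D ω
      · rw [hXval _ _ h0]; exact hmono ω (Nat.le_succ k)
      · exfalso
        exact h0 (lt_of_le_of_lt (hmono ω (Nat.le_succ k)) h1)
    · rw [hXtop _ _ h1]; exact le_top
  set κ : ℕ → Ω → ℝ≥0∞ := fun k ω => (k:ℝ≥0∞) ⊓ X k ω with hκ
  set dB : Ω → ℝ≥0∞ := res D B with hdB
  have hdBval : ∀ ω, ω ∈ B → dB ω = D ω := by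
    intro ω h; simp only [hdB, res, if_pos h]
  have hdBtop : ∀ ω, ω ∉ B → dB ω = ⊤ := by
    intro ω h; simp only [hdB, res, if_neg h]
  have hpred : IsPredTime 𝔽 dB := by
    constructor
    · apply isStop_res hDstop
      intro t
      have : {ω | D ω ≤ (t:ℝ≥0∞) ∧ ω ∈ B} = ⋂ n, {ω | D ω ≤ (t:ℝ≥0∞) ∧ d n ω < D ω} := by
        ext ω; simp only [mem_iInter, mem_setOf_eq, hB]
        exact ⟨fun ⟨h1, h2⟩ n => ⟨h1, h2 n⟩, fun h => ⟨(h 0).1, fun n => (h n).2⟩⟩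
      rw [this]
      exact MeasurableSet.iInter fun n => meas_le_and_gt hDstop (hd n).1 t
    · refine ⟨κ, fun k => isStop_min (isStop_const _) (hXstop k), ?_, ?_, ?_, ?_, ?_⟩
      · intro k ω
        exact lt_of_le_of_lt inf_le_left (ENNReal.natCast_lt_top k)
      · intro k ω
        by_cases h : ω ∈ B
        · rw [hdBval ω h]
          exact le_trans inf_le_right (by rw [hXval _ _ (h k)]; exact hdleD k ω)
        · rw [hdBtop ω h]; exact le_top
      · intro k ω h0
        by_cases h : ω ∈ B
        · rw [hdBval ω h] at h0 ⊢
          exact lt_of_le_of_lt (by rw [inf_le_iff, hXval _ _ (h k)]; exact Or.inr le_rfl) (h k)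
        · rw [hdBtop ω h]
          exact lt_of_le_of_lt inf_le_left (ENNReal.natCast_lt_top k)
      · intro ω
        apply monotone_nat_of_le_succ
        intro k
        exact le_inf (inf_le_left.trans (by exact_mod_cast Nat.cast_le.2 (Nat.le_succ k)))
          (inf_le_right.trans (hXmono ω (Nat.le_succ k)))
      · intro ω
        have hmon : Monotone fun k => κ k ω := by
          apply monotone_nat_of_le_succ
          intro k
          exact le_inf (inf_le_left.trans (by exact_mod_cast Nat.cast_le.2 (Nat.le_succ k)))
            (inf_le_right.trans (hXmono ω (Nat.le_succ k)))
        have := tendsto_atTop_iSup hmon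
        have heq : (⨆ k, κ k ω) = dB ω := by
          by_cases h : ω ∈ B
          · rw [hdBval ω h]
            apply le_antisymm
            · exact iSup_le fun k => inf_le_right.trans (by rw [hXval _ _ (h k)]; exact hdleD k ω)
            · apply le_of_forall_lt
              intro c hc
              rw [hD] at hc
              simp only [lt_iSup_iff] at hc ⊢
              rcases hc with ⟨n, hn⟩
              rcases ENNReal.exists_nat_gt (lt_of_lt_of_le hn le_top).ne with ⟨m, hm⟩
              refine ⟨max n m, lt_inf_iff.2 ⟨lt_of_lt_of_le hm ?_, ?_⟩⟩
              · exact_mod_cast Nat.cast_le.2 (le_max_right n m)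
              · rw [hXval _ _ (h (max n m))]
                exact lt_of_lt_of_le hn (hmono ω (le_max_left n m))
          · rw [hdBtop ω h]
            rw [hB, mem_setOf_eq] at h
            push_neg at h
            rcases h with ⟨n₀, hn₀⟩
            have hdn₀ : d n₀ ω = D ω := le_antisymm (hdleD n₀ ω) hn₀
            apply le_antisymm le_top
            apply le_of_forall_lt
            intro c hc
            simp only [lt_iSup_iff]
            rcases ENNReal.exists_nat_gt hc.ne with ⟨m, hm⟩
            refine ⟨max m n₀, lt_inf_iff.2 ⟨lt_of_lt_of_le hm ?_, ?_⟩⟩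
            · exact_mod_cast Nat.cast_le.2 (le_max_left m n₀)
            · have : ¬ d (max m n₀) ω < D ω := by
                push_neg
                rw [← hdn₀]; exact hmono ω (le_max_right m n₀)
              rw [hXtop _ _ this]
              exact lt_of_lt_of_le hm le_top
        rwa [heq] at this
  -- conclude accessibility
  apply isAcc_of_graph_subset hDstop (fun i => Nat.rec dB (fun k _ => d k) i)
  · intro i
    cases i with
    | zero => exact isAcc_of_pred hpred
    | succ k => exact hd k
  · rintro ⟨ω, s⟩ hx
    simp only [graph, mem_setOf_eq] at hx
    by_cases h : ω ∈ B
    · refine mem_iUnion.2 ⟨0, ?_⟩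
      simp only [graph, mem_setOf_eq]
      rw [← hx]; exact (hdBval ω h).symm ▸ rfl
    · rw [hB, mem_setOf_eq] at h
      push_neg at h
      rcases h with ⟨n₀, hn₀⟩
      refine mem_iUnion.2 ⟨n₀ + 1, ?_⟩
      simp only [graph, mem_setOf_eq]
      rw [← hx]
      exact le_antisymm (hdleD n₀ ω) hn₀


/-! ### The paving of finite unions of stochastic intervals -/

lemma isAcc_top : IsAccessibleTime 𝔽 (fun _ => (⊤:ℝ≥0∞)) := by
  refine ⟨isStop_top, fun _ _ => 0, fun _ => isPred_zero, ?_⟩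
  rintro ⟨ω, s⟩ h
  exact absurd (h.symm) (ENNReal.coe_lt_top (r := s)).ne

def PavOK (𝔽 : Filtration ℝ≥0 F) (q : (Ω → ℝ≥0∞) × (Ω → ℝ≥0∞)) : Prop :=
  IsAccessibleTime 𝔽 q.1 ∧ IsStopTime 𝔽 q.2 ∧ ∀ ω, q.2 ω < ⊤

def IsPav (𝔽 : Filtration ℝ≥0 F) (S : Set (Ω × ℝ≥0)) : Prop :=
  ∃ l : List ((Ω → ℝ≥0∞) × (Ω → ℝ≥0∞)), (∀ q ∈ l, PavOK 𝔽 q) ∧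
    S = ⋃ q ∈ l, stInterval q.1 q.2

lemma isPav_empty : IsPav 𝔽 (∅ : Set (Ω × ℝ≥0)) :=
  ⟨[], by simp, by simp⟩

lemma isPav_union {S T : Set (Ω × ℝ≥0)} (hS : IsPav 𝔽 S) (hT : IsPav 𝔽 T) :
    IsPav 𝔽 (S ∪ T) := by
  obtain ⟨l₁, h₁, rfl⟩ := hS
  obtain ⟨l₂, h₂, rfl⟩ := hT
  refine ⟨l₁ ++ l₂, ?_, ?_⟩
  · intro q hq
    rcases List.mem_append.1 hq with h | h
    exacts [h₁ q h, h₂ q h]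
  · ext x
    simp only [mem_iUnion, mem_union, List.mem_append]
    constructor
    · rintro (⟨q, hq, hx⟩ | ⟨q, hq, hx⟩)
      exacts [⟨q, Or.inl hq, hx⟩, ⟨q, Or.inr hq, hx⟩]
    · rintro ⟨q, hq | hq, hx⟩
      exacts [Or.inl ⟨q, hq, hx⟩, Or.inr ⟨q, hq, hx⟩]

lemma stInterval_inter (a b c d : Ω → ℝ≥0∞) :
    stInterval a b ∩ stInterval c d
      = stInterval (fun ω => a ω ⊔ c ω) (fun ω => b ω ⊓ d ω) := by
  ext ⟨ω, s⟩
  simp only [stInterval, mem_inter_iff, mem_setOf_eq, sup_le_iff, le_inf_iff]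
  tauto

lemma isPav_inter {S T : Set (Ω × ℝ≥0)} (hS : IsPav 𝔽 S) (hT : IsPav 𝔽 T) :
    IsPav 𝔽 (S ∩ T) := by
  obtain ⟨l₁, h₁, rfl⟩ := hS
  obtain ⟨l₂, h₂, rfl⟩ := hT
  refine ⟨l₁.flatMap (fun q => l₂.map (fun r =>
      (fun ω => q.1 ω ⊔ r.1 ω, fun ω => q.2 ω ⊓ r.2 ω))), ?_, ?_⟩
  · intro q hq
    rcases List.mem_flatMap.1 hq with ⟨a, ha, hq⟩
    rcases List.mem_map.1 hq with ⟨b, hb, rfl⟩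
    exact ⟨isAcc_max (h₁ a ha).1 (h₂ b hb).1,
      isStop_min (h₁ a ha).2.1 (h₂ b hb).2.1,
      fun ω => lt_of_le_of_lt inf_le_left ((h₁ a ha).2.2 ω)⟩
  · ext x
    simp only [mem_inter_iff, mem_iUnion]
    constructor
    · rintro ⟨⟨a, ha, hxa⟩, ⟨b, hb, hxb⟩⟩
      refine ⟨(fun ω => a.1 ω ⊔ b.1 ω, fun ω => a.2 ω ⊓ b.2 ω), ?_, ?_⟩
      · exact List.mem_flatMap.2 ⟨a, ha, List.mem_map.2 ⟨b, hb, rfl⟩⟩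
      · rw [← stInterval_inter]; exact ⟨hxa, hxb⟩
    · rintro ⟨q, hq, hx⟩
      rcases List.mem_flatMap.1 hq with ⟨a, ha, hq⟩
      rcases List.mem_map.1 hq with ⟨b, hb, rfl⟩
      rw [← stInterval_inter] at hx
      exact ⟨⟨a, ha, hx.1⟩, ⟨b, hb, hx.2⟩⟩

/-- The debut candidate associated to a single stochastic interval. -/
noncomputable def pt (q : (Ω → ℝ≥0∞) × (Ω → ℝ≥0∞)) : Ω → ℝ≥0∞ :=
  res q.1 {ω | q.1 ω ≤ q.2 ω}

lemma isStop_pt {q} (hq : PavOK 𝔽 q) : IsStopTime 𝔽 (pt q) :=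
  isStop_res hq.1.1 (fun t => meas_le_and_le hq.1.1 hq.2.1 t)

lemma isAcc_pt {q} (hq : PavOK 𝔽 q) : IsAccessibleTime 𝔽 (pt q) :=
  isAcc_of_graph_subset_one (isStop_pt hq) hq.1 graph_res_subset

/-- The debut of a finite union of stochastic intervals, as a minimum. -/
noncomputable def dF (l : List ((Ω → ℝ≥0∞) × (Ω → ℝ≥0∞))) : Ω → ℝ≥0∞ :=
  fun ω => (l.map (fun q => pt q ω)).foldr min ⊤

lemma dF_nil (ω : Ω) : dF ([] : List ((Ω → ℝ≥0∞) × (Ω → ℝ≥0∞))) ω = ⊤ := rfl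

lemma dF_cons (q) (l : List ((Ω → ℝ≥0∞) × (Ω → ℝ≥0∞))) (ω : Ω) :
    dF (q :: l) ω = pt q ω ⊓ dF l ω := rfl

lemma isStop_dF {l : List ((Ω → ℝ≥0∞) × (Ω → ℝ≥0∞))} (hl : ∀ q ∈ l, PavOK 𝔽 q) :
    IsStopTime 𝔽 (dF l) := by
  induction l with
  | nil => exact isStop_top
  | cons q l ih =>
    have : dF (q :: l) = fun ω => pt q ω ⊓ dF l ω := rfl
    rw [this]
    exact isStop_min (isStop_pt (hl q (List.mem_cons_self)))
      (ih (fun r hr => hl r (List.mem_cons_of_mem q hr)))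

lemma isAcc_dF {l : List ((Ω → ℝ≥0∞) × (Ω → ℝ≥0∞))} (hl : ∀ q ∈ l, PavOK 𝔽 q) :
    IsAccessibleTime 𝔽 (dF l) := by
  induction l with
  | nil => exact isAcc_top
  | cons q l ih =>
    have : dF (q :: l) = fun ω => pt q ω ⊓ dF l ω := rfl
    rw [this]
    exact isAcc_min (isAcc_pt (hl q (List.mem_cons_self)))
      (ih (fun r hr => hl r (List.mem_cons_of_mem q hr)))

lemma graph_dF_subset {l : List ((Ω → ℝ≥0∞) × (Ω → ℝ≥0∞))} :
    graph (dF l) ⊆ ⋃ q ∈ l, stInterval q.1 q.2 := by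
  induction l with
  | nil =>
    rintro ⟨ω, s⟩ h
    exact absurd h.symm (ENNReal.coe_lt_top (r := s)).ne
  | cons q l ih =>
    rintro ⟨ω, s⟩ h
    have h' : pt q ω ⊓ dF l ω = (s:ℝ≥0∞) := h
    rcases min_choice (pt q ω) (dF l ω) with hc | hc
    all_goals rw [hc] at h'
    · have hlt : pt q ω < ⊤ := h' ▸ ENNReal.coe_lt_top
      obtain ⟨hev, heq⟩ := res_lt_top_imp hlt
      refine mem_iUnion.2 ⟨q, mem_iUnion.2 ⟨List.mem_cons_self, ?_⟩⟩
      have h1 : q.1 ω = (s:ℝ≥0∞) := heq.trans h'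
      exact ⟨h1.le, h1 ▸ hev⟩
    · have := ih (show (ω, s) ∈ graph (dF l) from h')
      rcases mem_iUnion.1 this with ⟨r, hr⟩
      rcases mem_iUnion.1 hr with ⟨hrl, hx⟩
      exact mem_iUnion.2 ⟨r, mem_iUnion.2 ⟨List.mem_cons_of_mem q hrl, hx⟩⟩

lemma dF_le {l : List ((Ω → ℝ≥0∞) × (Ω → ℝ≥0∞))} {ω : Ω} {s : ℝ≥0}
    (h : (ω, s) ∈ ⋃ q ∈ l, stInterval q.1 q.2) : dF l ω ≤ (s:ℝ≥0∞) := by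
  induction l with
  | nil => simp at h
  | cons q l ih =>
    rw [dF_cons]
    rcases mem_iUnion.1 h with ⟨r, hr⟩
    rcases mem_iUnion.1 hr with ⟨hrl, hx⟩
    rcases List.mem_cons.1 hrl with rfl | hrl
    · refine inf_le_of_left_le ?_
      have hev : r.1 ω ≤ r.2 ω := hx.1.trans hx.2
      have : pt r ω = r.1 ω := by simp only [pt, res, mem_setOf_eq, if_pos hev]
      rw [this]; exact hx.1
    · exact inf_le_of_right_le (ih (mem_iUnion.2 ⟨r, mem_iUnion.2 ⟨hrl, hx⟩⟩))

lemma dF_eq_debut {l : List ((Ω → ℝ≥0∞) × (Ω → ℝ≥0∞))} (ω : Ω) :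
    dF l ω = debut (⋃ q ∈ l, stInterval q.1 q.2) ω := by
  apply le_antisymm
  · exact le_iInf fun s => le_iInf fun hs => dF_le hs
  · by_cases h : dF l ω < ⊤
    · have hg : (ω, (dF l ω).toNNReal) ∈ graph (dF l) := by
        simp only [graph, mem_setOf_eq, ENNReal.coe_toNNReal h.ne]
      have := graph_dF_subset hg
      refine iInf_le_of_le (dF l ω).toNNReal (iInf_le_of_le this ?_)
      rw [ENNReal.coe_toNNReal h.ne]
    · push_neg at h
      exact le_top.trans h

lemma debut_antitone {S T : Set (Ω × ℝ≥0)} (h : S ⊆ T) (ω : Ω) :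
    debut T ω ≤ debut S ω :=
  le_iInf fun s => le_iInf fun hs => iInf_le_of_le s (iInf_le_of_le (h hs) le_rfl)



/-! ### Decreasing intersections of paving elements and their exact sections -/

def IsPavD (𝔽 : Filtration ℝ≥0 F) (K : Set (Ω × ℝ≥0)) : Prop :=
  ∃ S : ℕ → Set (Ω × ℝ≥0), (∀ n, IsPav 𝔽 (S n)) ∧ (∀ n, S (n+1) ⊆ S n) ∧ K = ⋂ n, S n

lemma chain_subset {S : ℕ → Set (Ω × ℝ≥0)} (h : ∀ n, S (n+1) ⊆ S n) :
    ∀ {m n : ℕ}, m ≤ n → S n ⊆ S m := by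
  intro m n hmn
  induction hmn with
  | refl => exact subset_rfl
  | step h' ih => exact (h _).trans ih

lemma isPavD_of_isPav {S : Set (Ω × ℝ≥0)} (hS : IsPav 𝔽 S) : IsPavD 𝔽 S :=
  ⟨fun _ => S, fun _ => hS, fun _ => subset_rfl, (iInter_const S).symm⟩

lemma isPavD_union {K K' : Set (Ω × ℝ≥0)} (hK : IsPavD 𝔽 K) (hK' : IsPavD 𝔽 K') :
    IsPavD 𝔽 (K ∪ K') := by
  obtain ⟨S, h1, h2, rfl⟩ := hK
  obtain ⟨T, g1, g2, rfl⟩ := hK'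
  refine ⟨fun n => S n ∪ T n, fun n => isPav_union (h1 n) (g1 n),
    fun n => union_subset_union (h2 n) (g2 n), ?_⟩
  apply Subset.antisymm
  · rintro x (hx | hx) <;> exact mem_iInter.2 fun n =>
      (by rcases mem_iInter.1 hx n with h; first | exact Or.inl h | exact Or.inr h)
  · intro x hx
    by_cases hS : x ∈ ⋂ n, S n
    · exact Or.inl hS
    · rcases not_forall.1 (fun h => hS (mem_iInter.2 h)) with ⟨n₀, hn₀⟩
      refine Or.inr (mem_iInter.2 fun n => ?_)
      have hx' := mem_iInter.1 hx (max n n₀)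
      rcases hx' with h | h
      · exact absurd (chain_subset h2 (le_max_right n n₀) h) hn₀
      · exact chain_subset g2 (le_max_left n n₀) h

lemma isPav_biInter_range {U : ℕ → Set (Ω × ℝ≥0)} (hU : ∀ k, IsPav 𝔽 (U k)) (m : ℕ) :
    IsPav 𝔽 (⋂ k ∈ Finset.range (m+1), U k) := by
  induction m with
  | zero => simpa using hU 0
  | succ m ih =>
    rw [Finset.range_add_one, Finset.set_biInter_insert]
    exact isPav_inter (hU (m+1)) ih

lemma isPavD_iInter {K : ℕ → Set (Ω × ℝ≥0)} (hK : ∀ i, IsPavD 𝔽 (K i)) :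
    IsPavD 𝔽 (⋂ i, K i) := by
  choose Ss h1 h2 h3 using hK
  refine ⟨fun m => ⋂ k ∈ Finset.range (m+1), Ss k.unpair.1 k.unpair.2,
    fun m => isPav_biInter_range (fun k => h1 _ _) m, ?_, ?_⟩
  · intro m x hx
    simp only [mem_iInter] at hx ⊢
    intro k hk
    exact hx k (Finset.mem_range.2 (lt_of_lt_of_le (Finset.mem_range.1 hk) (Nat.le_succ _)))
  · ext x
    simp only [mem_iInter]
    constructor
    · intro h m k _
      have hx := h k.unpair.1
      rw [h3 k.unpair.1] at hx
      exact mem_iInter.1 hx k.unpair.2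
    · intro h i
      rw [h3 i]
      refine mem_iInter.2 fun n => ?_
      have := h (Nat.pair i n) (Nat.pair i n) (Finset.mem_range.2 (Nat.lt_succ_self _))
      simpa only [Nat.unpair_pair] using this

lemma stopTime_lt_top_measurableSet {σ : Ω → ℝ≥0∞} (hσ : IsStopTime 𝔽 σ) :
    MeasurableSet[F] {ω | σ ω < ⊤} := by
  have h : {ω | σ ω < ⊤} = ⋃ k : ℕ, {ω | σ ω ≤ (((k:ℝ≥0)):ℝ≥0∞)} := by
    ext ω
    simp only [mem_setOf_eq, mem_iUnion]
    constructor
    · intro h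
      rcases ENNReal.exists_nat_gt h.ne with ⟨k, hk⟩
      exact ⟨k, by exact_mod_cast hk.le⟩
    · rintro ⟨k, hk⟩
      exact lt_of_le_of_lt hk (by exact_mod_cast ENNReal.natCast_lt_top k)
  rw [h]
  exact MeasurableSet.iUnion fun k => 𝔽.le k _ (hσ k)

lemma pav_debut_facts {S : Set (Ω × ℝ≥0)} (hS : IsPav 𝔽 S) :
    IsAccessibleTime 𝔽 (debut S) ∧ graph (debut S) ⊆ S ∧
      (∀ ω (s : ℝ≥0), (ω, s) ∈ S → debut S ω ≤ (s:ℝ≥0∞)) := by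
  obtain ⟨l, hl, rfl⟩ := hS
  have hde : dF l = debut (⋃ q ∈ l, stInterval q.1 q.2) := funext fun ω => dF_eq_debut ω
  refine ⟨?_, ?_, fun ω s hs => ?_⟩
  · rw [← hde]; exact isAcc_dF hl
  · rw [← hde]; exact graph_dF_subset
  · rw [← hde]; exact dF_le hs

lemma pav_sect_bdd {S : Set (Ω × ℝ≥0)} (hS : IsPav 𝔽 S) (ω : Ω) :
    ∃ b : ℝ≥0∞, b < ⊤ ∧ ∀ s : ℝ≥0, (ω, s) ∈ S → (s:ℝ≥0∞) ≤ b := by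
  obtain ⟨l, hl, rfl⟩ := hS
  induction l with
  | nil => exact ⟨0, ENNReal.zero_lt_top, fun s hs => by simp at hs⟩
  | cons q l ih =>
    obtain ⟨b, hb, hball⟩ := ih (fun r hr => hl r (List.mem_cons_of_mem q hr))
    refine ⟨q.2 ω ⊔ b, ?_, ?_⟩
    · exact sup_lt_iff.2 ⟨(hl q (List.mem_cons_self)).2.2 ω, hb⟩
    · intro s hs
      rcases mem_iUnion.1 hs with ⟨r, hr⟩
      rcases mem_iUnion.1 hr with ⟨hrl, hx⟩
      rcases List.mem_cons.1 hrl with rfl | hrl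
      · exact le_sup_of_le_left hx.2
      · exact le_sup_of_le_right (hball s (mem_iUnion.2 ⟨r, mem_iUnion.2 ⟨hrl, hx⟩⟩))

/-- Exact accessible section for a decreasing intersection of paving elements,
explicit form. -/
lemma pavD_section_expl (S : ℕ → Set (Ω × ℝ≥0)) (hpav : ∀ n, IsPav 𝔽 (S n))
    (hdec : ∀ n, S (n+1) ⊆ S n) :
    IsAccessibleTime 𝔽 (fun ω => ⨆ n, debut (S n) ω) ∧
    graph (fun ω => ⨆ n, debut (S n) ω) ⊆ ⋂ n, S n ∧
    {ω | (⨆ n, debut (S n) ω) < ⊤} = projOmega (⋂ n, S n) ∧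
    {ω | (⨆ n, debut (S n) ω) < ⊤} = ⋂ n, projOmega (S n) := by
  have hfacts := fun n => pav_debut_facts (hpav n)
  set d : Ω → ℝ≥0∞ := fun ω => ⨆ n, debut (S n) ω with hd
  have hmono : ∀ ω, Monotone fun n => debut (S n) ω := by
    intro ω
    apply monotone_nat_of_le_succ
    intro n
    exact debut_antitone (hdec n) ω
  have hacc : IsAccessibleTime 𝔽 d := isAcc_iSup _ (fun n => (hfacts n).1) hmono
  have key : ∀ ω (s : ℝ≥0), d ω = (s:ℝ≥0∞) → (ω, s) ∈ ⋂ n, S n := by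
    intro ω s hds
    have hlen : ∀ n, debut (S n) ω ≤ (s:ℝ≥0∞) := by
      intro n; rw [← hds]; exact le_iSup (fun n => debut (S n) ω) n
    have hltn : ∀ n, debut (S n) ω < ⊤ := fun n => lt_of_le_of_lt (hlen n) ENNReal.coe_lt_top
    have hcast : ∀ n, (((debut (S n) ω).toNNReal : ℝ≥0) : ℝ≥0∞) = debut (S n) ω :=
      fun n => ENNReal.coe_toNNReal (hltn n).ne
    have hpt : ∀ n, (ω, (debut (S n) ω).toNNReal) ∈ S n := by
      intro n
      apply (hfacts n).2.1
      simp only [graph, mem_setOf_eq, hcast n]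
    refine mem_iInter.2 fun m => ?_
    obtain ⟨l, hl, hle⟩ := hpav m
    have hex : ∀ n : ℕ, ∃ q, q ∈ l ∧ q.1 ω ≤ debut (S (n+m)) ω ∧
        debut (S (n+m)) ω ≤ q.2 ω := by
      intro n
      have hxm : (ω, (debut (S (n+m)) ω).toNNReal) ∈ S m :=
        chain_subset hdec (Nat.le_add_left m n) (hpt (n+m))
      rw [hle] at hxm
      rcases mem_iUnion.1 hxm with ⟨q, hq⟩
      rcases mem_iUnion.1 hq with ⟨hql, hmem⟩
      obtain ⟨hmem1, hmem2⟩ := hmem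
      rw [hcast (n+m)] at hmem1 hmem2
      exact ⟨q, hql, hmem1, hmem2⟩
    choose qf hq1 hq2 hq3 using hex
    haveI : Finite {q // q ∈ l} := (l.finite_toSet).to_subtype
    obtain ⟨q0, hq0⟩ := Finite.exists_infinite_fiber (fun n => (⟨qf n, hq1 n⟩ : {q // q ∈ l}))
    have hSf : ((fun n => (⟨qf n, hq1 n⟩ : {q // q ∈ l})) ⁻¹' {q0}).Infinite :=
      Set.infinite_coe_iff.1 hq0
    have hval : ∀ n ∈ (fun n => (⟨qf n, hq1 n⟩ : {q // q ∈ l})) ⁻¹' {q0}, qf n = q0.1 := by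
      intro n hn
      exact congrArg Subtype.val hn
    obtain ⟨n₁, hn₁⟩ := hSf.nonempty
    have hlow : q0.1.1 ω ≤ (s:ℝ≥0∞) := by
      rw [← hval n₁ hn₁]
      exact (hq2 n₁).trans (hlen (n₁+m))
    have hup : (s:ℝ≥0∞) ≤ q0.1.2 ω := by
      rw [← hds]
      refine iSup_le fun k => ?_
      obtain ⟨n₂, hn₂mem, hn₂gt⟩ := hSf.exists_gt k
      refine le_trans (hmono ω (le_trans (le_of_lt hn₂gt) (Nat.le_add_right n₂ m))) ?_
      rw [← hval n₂ hn₂mem] at *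
      exact hq3 n₂
    rw [hle]
    exact mem_iUnion.2 ⟨q0.1, mem_iUnion.2 ⟨q0.2, ⟨hlow, hup⟩⟩⟩
  refine ⟨hacc, ?_, ?_, ?_⟩
  · rintro ⟨ω, s⟩ h
    exact key ω s h
  · ext ω
    simp only [mem_setOf_eq, projOmega]
    constructor
    · intro h
      refine ⟨(ω, (d ω).toNNReal), key ω _ (ENNReal.coe_toNNReal h.ne).symm, rfl⟩
    · rintro ⟨⟨ω', s⟩, hmem, rfl⟩
      have : d ω' ≤ (s:ℝ≥0∞) :=
        iSup_le fun n => (hfacts n).2.2 ω' s (mem_iInter.1 hmem n)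
      exact lt_of_le_of_lt this ENNReal.coe_lt_top
  · ext ω
    simp only [mem_setOf_eq, mem_iInter]
    constructor
    · intro h n
      have hg : (ω, (d ω).toNNReal) ∈ ⋂ n, S n := key ω _ (ENNReal.coe_toNNReal h.ne).symm
      exact ⟨(ω, (d ω).toNNReal), mem_iInter.1 hg n, rfl⟩
    · intro h
      obtain ⟨b, hb, hball⟩ := pav_sect_bdd (hpav 0) ω
      have hble : d ω ≤ b := by
        refine iSup_le fun n => ?_
        obtain ⟨⟨ω', s⟩, hmem', heq⟩ := h n
        have heq' : ω' = ω := heq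
        have hmem : (ω, s) ∈ S n := by rw [← heq']; exact hmem' 
        have hlt : debut (S n) ω < ⊤ :=
          lt_of_le_of_lt ((hfacts n).2.2 ω s hmem) ENNReal.coe_lt_top
        have hpt : (ω, (debut (S n) ω).toNNReal) ∈ S n := by
          apply (hfacts n).2.1
          simp only [graph, mem_setOf_eq, ENNReal.coe_toNNReal hlt.ne]
        have := hball _ (chain_subset hdec (Nat.zero_le n) hpt)
        rwa [ENNReal.coe_toNNReal hlt.ne] at this
      exact lt_of_le_of_lt hble hb



/-! ### The capacity `I(S) = P(π(S))` -/

lemma pav_proj_eq {S : Set (Ω × ℝ≥0)} (hS : IsPav 𝔽 S) :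
    projOmega S = {ω | debut S ω < ⊤} := by
  have hfacts := pav_debut_facts hS
  ext ω
  simp only [projOmega, mem_setOf_eq]
  constructor
  · rintro ⟨⟨ω', s⟩, hmem, rfl⟩
    exact lt_of_le_of_lt (hfacts.2.2 _ s hmem) ENNReal.coe_lt_top
  · intro h
    refine ⟨(ω, (debut S ω).toNNReal), hfacts.2.1 ?_, rfl⟩
    simp only [graph, mem_setOf_eq, ENNReal.coe_toNNReal h.ne]

lemma pav_proj_measurable {S : Set (Ω × ℝ≥0)} (hS : IsPav 𝔽 S) :
    MeasurableSet[F] (projOmega S) := by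
  rw [pav_proj_eq hS]
  exact stopTime_lt_top_measurableSet (pav_debut_facts hS).1.1

variable (P : Measure Ω) [IsProbabilityMeasure P]

/-- The capacity associated to the measure `P`. -/
noncomputable def capI (S : Set (Ω × ℝ≥0)) : ℝ≥0∞ := P (projOmega S)

variable {P}

lemma capI_ne_top {S : Set (Ω × ℝ≥0)} : capI P S ≠ ⊤ := measure_ne_top P _

lemma projOmega_mono {S T : Set (Ω × ℝ≥0)} (h : S ⊆ T) : projOmega S ⊆ projOmega T :=
  image_mono h

lemma capI_mono {S T : Set (Ω × ℝ≥0)} (h : S ⊆ T) : capI P S ≤ capI P T :=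
  measure_mono (projOmega_mono h)

lemma projOmega_union (S T : Set (Ω × ℝ≥0)) :
    projOmega (S ∪ T) = projOmega S ∪ projOmega T := image_union _ S T

lemma projOmega_iUnion {ι : Sort*} (S : ι → Set (Ω × ℝ≥0)) :
    projOmega (⋃ i, S i) = ⋃ i, projOmega (S i) := image_iUnion

/-- Continuity of the capacity from below along monotone sequences of arbitrary sets. -/
lemma capI_iUnion_monotone {X : ℕ → Set (Ω × ℝ≥0)} (h : Monotone X) :
    capI P (⋃ n, X n) = ⨆ n, capI P (X n) := by
  unfold capI
  rw [projOmega_iUnion]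
  exact Monotone.measure_iUnion (fun a b hab => projOmega_mono (h hab))

lemma meas_strong_subadd (X Y : Set Ω) : P (X ∪ Y) + P (X ∩ Y) ≤ P X + P Y := by
  have h1 : P (X ∪ Y) ≤ P (toMeasurable P X ∪ toMeasurable P Y) :=
    measure_mono (union_subset_union (subset_toMeasurable P X) (subset_toMeasurable P Y))
  have h2 : P (X ∩ Y) ≤ P (toMeasurable P X ∩ toMeasurable P Y) :=
    measure_mono (inter_subset_inter (subset_toMeasurable P X) (subset_toMeasurable P Y))
  calc P (X ∪ Y) + P (X ∩ Y)
      ≤ P (toMeasurable P X ∪ toMeasurable P Y) + P (toMeasurable P X ∩ toMeasurable P Y) :=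
        add_le_add h1 h2
    _ = P (toMeasurable P X) + P (toMeasurable P Y) :=
        measure_union_add_inter _ (measurableSet_toMeasurable P Y)
    _ = P X + P Y := by rw [measure_toMeasurable, measure_toMeasurable]

lemma meas_union_step {U V U' : Set Ω} (h : U' ⊆ U) :
    P (U ∪ V) + P U' ≤ P (U' ∪ V) + P U := by
  have key := meas_strong_subadd (P := P) (U' ∪ V) U
  have h1 : U' ∪ V ∪ U = U ∪ V := by
    rw [union_right_comm, union_eq_self_of_subset_left h]
  have h2 : U' ⊆ (U' ∪ V) ∩ U := subset_inter subset_union_left h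
  calc P (U ∪ V) + P U' ≤ P (U ∪ V) + P ((U' ∪ V) ∩ U) :=
        add_le_add_right (measure_mono h2) _
    _ = P (U' ∪ V ∪ U) + P ((U' ∪ V) ∩ U) := by rw [h1]
    _ ≤ P (U' ∪ V) + P U := key

lemma capI_union_step {A B KA : Set (Ω × ℝ≥0)} (h : KA ⊆ A) :
    capI P (A ∪ B) + capI P KA ≤ capI P (KA ∪ B) + capI P A := by
  unfold capI
  rw [projOmega_union, projOmega_union]
  exact meas_union_step (projOmega_mono h)

lemma capI_finUnion_defect {X K : ℕ → Set (Ω × ℝ≥0)} (h : ∀ n, K n ⊆ X n) (N : ℕ) :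
    capI P (⋃ n ∈ Finset.range N, X n) + ∑ n ∈ Finset.range N, capI P (K n)
      ≤ capI P (⋃ n ∈ Finset.range N, K n) + ∑ n ∈ Finset.range N, capI P (X n) := by
  induction N with
  | zero => simp
  | succ N ih =>
    have hXU : (⋃ n ∈ Finset.range (N+1), X n)
        = X N ∪ ⋃ n ∈ Finset.range N, X n := by
      rw [Finset.range_add_one, Finset.set_biUnion_insert]
    have hKU : (⋃ n ∈ Finset.range (N+1), K n)
        = K N ∪ ⋃ n ∈ Finset.range N, K n := by
      rw [Finset.range_add_one, Finset.set_biUnion_insert]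
    set XU := ⋃ n ∈ Finset.range N, X n
    set KU := ⋃ n ∈ Finset.range N, K n
    have step1 : capI P (X N ∪ XU) + capI P (K N)
        ≤ capI P (K N ∪ XU) + capI P (X N) := capI_union_step (h N)
    have step2 : capI P (XU ∪ K N) + capI P KU
        ≤ capI P (KU ∪ K N) + capI P XU := capI_union_step (fun x hx => by
          rcases mem_iUnion.1 hx with ⟨n, hn⟩
          rcases mem_iUnion.1 hn with ⟨hnN, hxn⟩
          exact mem_iUnion.2 ⟨n, mem_iUnion.2 ⟨hnN, h n hxn⟩⟩)
    have hfin : capI P KU + capI P XU ≠ ⊤ :=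
      ENNReal.add_ne_top.2 ⟨capI_ne_top, capI_ne_top⟩
    have step2' : capI P (XU ∪ K N) + ∑ n ∈ Finset.range N, capI P (K n)
        ≤ capI P (KU ∪ K N) + ∑ n ∈ Finset.range N, capI P (X n) := by
      have hadd := add_le_add step2 ih
      have e1 : capI P (XU ∪ K N) + capI P KU
            + (capI P XU + ∑ n ∈ Finset.range N, capI P (K n))
          = capI P (XU ∪ K N) + ∑ n ∈ Finset.range N, capI P (K n)
            + (capI P KU + capI P XU) := by ring
      have e2 : capI P (KU ∪ K N) + capI P XU
            + (capI P KU + ∑ n ∈ Finset.range N, capI P (X n))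
          = capI P (KU ∪ K N) + ∑ n ∈ Finset.range N, capI P (X n)
            + (capI P KU + capI P XU) := by ring
      rw [e1, e2] at hadd
      exact (ENNReal.add_le_add_iff_right hfin).1 hadd
    rw [hXU, hKU, Finset.sum_range_succ, Finset.sum_range_succ]
    calc capI P (X N ∪ XU) + (∑ n ∈ Finset.range N, capI P (K n) + capI P (K N))
        = capI P (X N ∪ XU) + capI P (K N) + ∑ n ∈ Finset.range N, capI P (K n) := by ring
      _ ≤ capI P (K N ∪ XU) + capI P (X N) + ∑ n ∈ Finset.range N, capI P (K n) :=
          add_le_add_left step1 _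
      _ = capI P (XU ∪ K N) + ∑ n ∈ Finset.range N, capI P (K n) + capI P (X N) := by
          rw [union_comm]; ring
      _ ≤ capI P (KU ∪ K N) + ∑ n ∈ Finset.range N, capI P (X n) + capI P (X N) :=
          add_le_add_left step2' _
      _ = capI P (K N ∪ KU) + (∑ n ∈ Finset.range N, capI P (X n) + capI P (X N)) := by
          rw [union_comm]; ring

/-- Continuity of the capacity from above along decreasing sequences of paving elements. -/
lemma capI_iInter_pav {S : ℕ → Set (Ω × ℝ≥0)} (hpav : ∀ n, IsPav 𝔽 (S n))
    (hdec : ∀ n, S (n+1) ⊆ S n) :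
    capI P (⋂ n, S n) = ⨅ n, capI P (S n) := by
  have hexpl := pavD_section_expl S hpav hdec
  have hproj : projOmega (⋂ n, S n) = ⋂ n, projOmega (S n) := by
    rw [← hexpl.2.2.1, hexpl.2.2.2]
  unfold capI
  rw [hproj]
  refine Antitone.measure_iInter ?_ (fun n => (pav_proj_measurable (hpav n)).nullMeasurableSet)
    ⟨0, measure_ne_top P _⟩
  have hanti : Antitone fun n => projOmega (S n) := by
    apply antitone_nat_of_succ_le
    intro n
    exact projOmega_mono (hdec n)
  exact hanti


/-! ### Suslin schemes over the paving -/

/-- `X` is analytic over the paving: it is the result of the Suslin operation applied to a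
prefix-determined scheme of paving elements, decreasing along branches. -/
def AnPav (𝔽 : Filtration ℝ≥0 F) (X : Set (Ω × ℝ≥0)) : Prop :=
  ∃ C : (ℕ → ℕ) → ℕ → Set (Ω × ℝ≥0),
    (∀ f n, IsPav 𝔽 (C f n)) ∧
    (∀ f g n, (∀ i, i ≤ n → f i = g i) → C f n = C g n) ∧
    (∀ f n, C f (n+1) ⊆ C f n) ∧
    X = ⋃ f : ℕ → ℕ, ⋂ n, C f n

lemma anPav_of_pavD {K : Set (Ω × ℝ≥0)} (hK : IsPavD 𝔽 K) : AnPav 𝔽 K := by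
  obtain ⟨S, h1, h2, rfl⟩ := hK
  refine ⟨fun _ n => S n, fun _ n => h1 n, fun _ _ _ _ => rfl, fun _ n => h2 n, ?_⟩
  apply Subset.antisymm
  · intro x hx
    exact mem_iUnion.2 ⟨fun _ => 0, hx⟩
  · intro x hx
    rcases mem_iUnion.1 hx with ⟨f, hf⟩
    exact hf

lemma anPav_iUnion {X : ℕ → Set (Ω × ℝ≥0)} (hX : ∀ i, AnPav 𝔽 (X i)) :
    AnPav 𝔽 (⋃ i, X i) := by
  choose C h1 h2 h3 h4 using hX
  classical
  set sub : (ℕ → ℕ) → (ℕ → ℕ) := fun f m => if m = 0 then (f 0).unpair.2 else f m with hsub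
  set D : (ℕ → ℕ) → ℕ → Set (Ω × ℝ≥0) := fun f n => C (f 0).unpair.1 (sub f) n with hD
  refine ⟨D, fun f n => h1 _ _ _, ?_, fun f n => h3 _ _ n, ?_⟩
  · intro f g n hfg
    have h0 : f 0 = g 0 := hfg 0 (Nat.zero_le n)
    calc D f n = C (f 0).unpair.1 (sub f) n := rfl
      _ = C (f 0).unpair.1 (sub g) n := by
          refine h2 _ _ _ n fun i hi => ?_
          by_cases hi0 : i = 0
          · simp [hsub, hi0, h0]
          · simp only [hsub, if_neg hi0]
            exact hfg i hi
      _ = C (g 0).unpair.1 (sub g) n := by rw [h0]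
  · apply Subset.antisymm
    · intro x hx
      rcases mem_iUnion.1 hx with ⟨i, hxi⟩
      rw [h4 i] at hxi
      rcases mem_iUnion.1 hxi with ⟨f', hf'⟩
      set f : ℕ → ℕ := fun m => if m = 0 then Nat.pair i (f' 0) else f' m with hf
      have hf0 : f 0 = Nat.pair i (f' 0) := by simp [hf]
      have hDs : ∀ n, D f n = C i f' n := by
        intro n
        have hs : sub f = f' := by
          funext m
          by_cases hm : m = 0
          · simp [hsub, hm, hf0, Nat.unpair_pair]
          · simp [hsub, hf, if_neg hm]
        simp only [hD, hf0, Nat.unpair_pair, hs]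
      refine mem_iUnion.2 ⟨f, mem_iInter.2 fun n => ?_⟩
      rw [hDs n]
      exact mem_iInter.1 hf' n
    · intro x hx
      rcases mem_iUnion.1 hx with ⟨f, hf⟩
      refine mem_iUnion.2 ⟨(f 0).unpair.1, ?_⟩
      rw [h4 (f 0).unpair.1]
      exact mem_iUnion.2 ⟨sub f, hf⟩

lemma anPav_iInter {X : ℕ → Set (Ω × ℝ≥0)} (hX : ∀ i, AnPav 𝔽 (X i)) :
    AnPav 𝔽 (⋂ i, X i) := by
  choose C h1 h2 h3 h4 using hX
  set ext : (ℕ → ℕ) → ℕ → (ℕ → ℕ) := fun f i m => f (Nat.pair i m) with hext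
  set D : (ℕ → ℕ) → ℕ → Set (Ω × ℝ≥0) := fun f n =>
    ⋂ k ∈ Finset.range (n+1), C k.unpair.1 (ext f k.unpair.1) k.unpair.2 with hD
  refine ⟨D, fun f n => isPav_biInter_range (fun k => h1 _ _ _) n, ?_, ?_, ?_⟩
  · intro f g n hfg
    simp only [hD]
    apply iInter₂_congr
    intro k hk
    apply h2
    intro m hm
    simp only [hext]
    apply hfg
    calc Nat.pair k.unpair.1 m ≤ Nat.pair k.unpair.1 k.unpair.2 := by
          rcases lt_or_eq_of_le hm with hlt | rfl
          · exact le_of_lt (Nat.pair_lt_pair_right _ hlt)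
          · exact le_rfl
      _ = k := Nat.pair_unpair k
      _ ≤ n := Nat.lt_succ_iff.1 (Finset.mem_range.1 hk)
  · intro f n x hx
    simp only [hD, mem_iInter] at hx ⊢
    intro k hk
    exact hx k (Finset.mem_range.2 (lt_of_lt_of_le (Finset.mem_range.1 hk) (Nat.le_succ _)))
  · apply Subset.antisymm
    · intro x hx
      have hXi : ∀ i, ∃ fi : ℕ → ℕ, x ∈ ⋂ n, C i fi n := by
        intro i
        have := mem_iInter.1 hx i
        rw [h4 i] at this
        exact mem_iUnion.1 this
      choose fi hfi using hXi
      set f : ℕ → ℕ := fun k => fi k.unpair.1 k.unpair.2 with hf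
      refine mem_iUnion.2 ⟨f, mem_iInter.2 fun n => ?_⟩
      simp only [hD, mem_iInter]
      intro k hk
      have heq : ext f k.unpair.1 = fi k.unpair.1 := by
        funext m
        simp [hext, hf, Nat.unpair_pair]
      rw [heq]
      exact mem_iInter.1 (hfi k.unpair.1) k.unpair.2
    · intro x hx
      rcases mem_iUnion.1 hx with ⟨f, hf⟩
      refine mem_iInter.2 fun i => ?_
      rw [h4 i]
      refine mem_iUnion.2 ⟨ext f i, mem_iInter.2 fun m => ?_⟩
      have := mem_iInter.1 hf (Nat.pair i m)
      simp only [hD, mem_iInter] at this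
      have h5 := this (Nat.pair i m) (Finset.mem_range.2 (Nat.lt_succ_self _))
      have hu1 : (Nat.pair i m).unpair.1 = i := by rw [Nat.unpair_pair]
      have hu2 : (Nat.pair i m).unpair.2 = m := by rw [Nat.unpair_pair]
      rw [hu1, hu2] at h5
      exact h5


/-! ### Rays and co-rays are analytic over the paving -/

lemma isPav_single {q : (Ω → ℝ≥0∞) × (Ω → ℝ≥0∞)} (hq : PavOK 𝔽 q) :
    IsPav 𝔽 (stInterval q.1 q.2) := by
  refine ⟨[q], by simp [hq], ?_⟩
  ext x
  simp

lemma anPav_union2 {A B : Set (Ω × ℝ≥0)} (hA : AnPav 𝔽 A) (hB : AnPav 𝔽 B) :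
    AnPav 𝔽 (A ∪ B) := by
  have : A ∪ B = ⋃ n : ℕ, (if n = 0 then A else B) := by
    ext x
    simp only [mem_union, mem_iUnion]
    constructor
    · rintro (h | h)
      exacts [⟨0, by simpa using h⟩, ⟨1, by simpa using h⟩]
    · rintro ⟨n, hn⟩
      by_cases h : n = 0
      · rw [if_pos h] at hn; exact Or.inl hn
      · rw [if_neg h] at hn; exact Or.inr hn
  rw [this]
  exact anPav_iUnion (fun n => by by_cases h : n = 0 <;> simp [h, hA, hB])

def coRay (τ : Ω → ℝ≥0∞) : Set (Ω × ℝ≥0) := {p | (p.2 : ℝ≥0∞) < τ p.1}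

lemma compl_rayFrom (τ : Ω → ℝ≥0∞) : (rayFrom τ)ᶜ = coRay τ := by
  ext p
  simp only [rayFrom, coRay, mem_compl_iff, mem_setOf_eq, not_le]

/-- A ray from an accessible time is analytic. -/
lemma anPav_ray {τ : Ω → ℝ≥0∞} (hτ : IsAccessibleTime 𝔽 τ) : AnPav 𝔽 (rayFrom τ) := by
  have hid : rayFrom τ = ⋃ M : ℕ, stInterval τ (fun _ => ((M:ℝ≥0):ℝ≥0∞)) := by
    ext ⟨ω, s⟩
    simp only [rayFrom, stInterval, mem_setOf_eq, mem_iUnion]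
    constructor
    · intro h
      rcases exists_nat_ge s with ⟨M, hM⟩
      exact ⟨M, h, by exact_mod_cast hM⟩
    · rintro ⟨M, h1, _⟩
      exact h1
  rw [hid]
  refine anPav_iUnion fun M => anPav_of_pavD (isPavD_of_isPav
    (isPav_single (q := (τ, fun _ => ((M:ℝ≥0):ℝ≥0∞))) ?_))
  exact ⟨hτ, isStop_const _, fun ω => ENNReal.coe_lt_top⟩

/-- The co-ray of a predictable time is analytic (via its announcing sequence). -/
lemma anPav_coRay_pred {ρ : Ω → ℝ≥0∞} (hρ : IsPredTime 𝔽 ρ) : AnPav 𝔽 (coRay ρ) := by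
  obtain ⟨hstop, ρs, hs1, hs2, hs3, hs4, hs5, hs6⟩ := hρ
  set E : Set Ω := {ω | 0 < ρ ω} with hE
  set z : Ω → ℝ≥0∞ := res (fun _ => 0) E with hz
  have hzstop : IsStopTime 𝔽 z := by
    apply isStop_res isStop_zero
    intro t
    have : {ω | (0:ℝ≥0∞) ≤ (t:ℝ≥0∞) ∧ ω ∈ E} = {ω | ρ ω ≤ ((0:ℝ≥0):ℝ≥0∞)}ᶜ := by
      ext ω
      simp only [hE, mem_setOf_eq, mem_compl_iff, zero_le, true_and, not_le,
        ENNReal.coe_zero]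
    rw [this]
    exact (𝔽.mono (zero_le : (0:ℝ≥0) ≤ t) _ (hstop 0)).compl
  have hzacc : IsAccessibleTime 𝔽 z :=
    isAcc_of_graph_subset_one hzstop (isAcc_of_pred isPred_zero) graph_res_subset
  have hsup : ∀ ω, (⨆ k, ρs k ω) = ρ ω := by
    intro ω
    exact tendsto_nhds_unique (tendsto_atTop_iSup (hs5 ω)) (hs6 ω)
  have hid : coRay ρ = ⋃ k : ℕ, stInterval z (ρs k) := by
    ext ⟨ω, s⟩
    simp only [coRay, stInterval, mem_setOf_eq, mem_iUnion]
    constructor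
    · intro h
      have hpos : 0 < ρ ω := lt_of_le_of_lt zero_le h
      have hzz : z ω = 0 := by simp [hz, res, hE, mem_setOf_eq, hpos]
      have : ∃ k, (s:ℝ≥0∞) < ρs k ω := by
        rw [← lt_iSup_iff, hsup ω]; exact h
      rcases this with ⟨k, hk⟩
      exact ⟨k, by rw [hzz]; exact zero_le, hk.le⟩
    · rintro ⟨k, h1, h2⟩
      have hmem : ω ∈ E := by
        by_contra hne
        have : z ω = ⊤ := by simp [hz, res, hne]
        rw [this] at h1
        exact (ENNReal.coe_lt_top (r := s)).ne (top_le_iff.1 h1)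
      exact lt_of_le_of_lt h2 (hs4 k ω hmem)
  rw [hid]
  refine anPav_iUnion fun k => anPav_of_pavD (isPavD_of_isPav
    (isPav_single (q := (z, ρs k)) ?_))
  exact ⟨hzacc, hs1 k, hs2 k⟩

/-- The co-ray of an accessible time is analytic. -/
lemma anPav_coRay_acc {τ : Ω → ℝ≥0∞} (hτ : IsAccessibleTime 𝔽 τ) : AnPav 𝔽 (coRay τ) := by
  obtain ⟨hstop, ρ, hρ, hcov⟩ := hτ
  set g : ℕ → Ω → ℝ≥0∞ := fun m => res (ρ m) {ω | ρ m ω = τ ω} with hg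
  have hid : coRay τ = ⋂ m, coRay (g m) := by
    ext ⟨ω, s⟩
    simp only [coRay, mem_setOf_eq, mem_iInter]
    constructor
    · intro h m
      by_cases he : ρ m ω = τ ω
      · have : g m ω = τ ω := by rw [hg]; simp only [res, mem_setOf_eq, if_pos he]; exact he
        rwa [this]
      · have : g m ω = ⊤ := by rw [hg]; simp only [res, mem_setOf_eq, if_neg he]
        rw [this]; exact ENNReal.coe_lt_top
    · intro h
      by_cases htop : τ ω = ⊤
      · rw [htop]; exact ENNReal.coe_lt_top
      · have hgr : (ω, (τ ω).toNNReal) ∈ graph τ := by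
          simp only [graph, mem_setOf_eq, ENNReal.coe_toNNReal htop]
        rcases mem_iUnion.1 (hcov hgr) with ⟨m, hm⟩
        have hme : ρ m ω = τ ω := by
          have : ρ m ω = ((τ ω).toNNReal : ℝ≥0∞) := hm
          rwa [ENNReal.coe_toNNReal htop] at this
        have : g m ω = τ ω := by rw [hg]; simp only [res, mem_setOf_eq, if_pos hme]; exact hme
        rw [← this]
        exact h m
  rw [hid]
  refine anPav_iInter fun m => ?_
  -- coRay (g m) = coRay (ρ m) ∪ rayFrom (res (ρ m) {ρ m ≠ τ})
  set w : Ω → ℝ≥0∞ := res (ρ m) {ω | ¬ ρ m ω = τ ω} with hw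
  have hwstop : IsStopTime 𝔽 w := by
    apply isStop_res (hρ m).1
    intro t
    have : {ω | ρ m ω ≤ (t:ℝ≥0∞) ∧ ω ∈ {ω | ¬ ρ m ω = τ ω}}
        = {ω | ρ m ω ≤ (t:ℝ≥0∞)} \ {ω | ρ m ω ≤ (t:ℝ≥0∞) ∧ ρ m ω = τ ω} := by
      ext ω
      simp only [mem_setOf_eq, mem_diff, not_and]
      constructor
      · rintro ⟨h1, h2⟩; exact ⟨h1, fun _ => h2⟩
      · rintro ⟨h1, h2⟩; exact ⟨h1, h2 h1⟩
    rw [this]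
    exact ((hρ m).1 t).diff (meas_le_and_eq (hρ m).1 hstop t)
  have hwacc : IsAccessibleTime 𝔽 w :=
    isAcc_of_graph_subset_one hwstop (isAcc_of_pred (hρ m)) graph_res_subset
  have hsplit : coRay (g m) = coRay (ρ m) ∪ rayFrom w := by
    ext ⟨ω, s⟩
    simp only [coRay, rayFrom, mem_union, mem_setOf_eq]
    by_cases he : ρ m ω = τ ω
    · have h1 : g m ω = ρ m ω := by rw [hg]; simp only [res, mem_setOf_eq, if_pos he]
      have h2 : w ω = ⊤ := by rw [hw]; simp only [res, mem_setOf_eq, if_neg (not_not.2 he)]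
      rw [h1, h2]
      constructor
      · exact Or.inl
      · rintro (h | h)
        · exact h
        · exact absurd (top_le_iff.1 h) (ENNReal.coe_lt_top (r := s)).ne
    · have h1 : g m ω = ⊤ := by rw [hg]; simp only [res, mem_setOf_eq, if_neg he]
      have h2 : w ω = ρ m ω := by rw [hw]; simp only [res, mem_setOf_eq, if_pos he]
      rw [h1, h2]
      constructor
      · intro _
        rcases le_or_gt (ρ m ω) (s:ℝ≥0∞) with h | h
        exacts [Or.inr h, Or.inl h]
      · intro _
        exact ENNReal.coe_lt_top
  rw [hsplit]
  exact anPav_union2 (anPav_coRay_pred (hρ m)) (anPav_ray hwacc)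


/-! ### Choquet capacitability over the paving -/

lemma isPav_biUnion_finset {ι : Type*} (s : Finset ι) (S : ι → Set (Ω × ℝ≥0))
    (h : ∀ i ∈ s, IsPav 𝔽 (S i)) : IsPav 𝔽 (⋃ i ∈ s, S i) := by
  classical
  induction s using Finset.induction_on with
  | empty => simpa using isPav_empty
  | insert a s' hni ih =>
    rw [Finset.set_biUnion_insert]
    exact isPav_union (h a (Finset.mem_insert_self a s'))
      (ih (fun i hi => h i (Finset.mem_insert_of_mem hi)))

lemma geom_tail_sum (ε : ℝ≥0∞) : ∀ k : ℕ, (∑ i ∈ Finset.range k, ε / 2^(i+1)) + ε / 2^k = ε := by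
  intro k
  induction k with
  | zero => simp
  | succ k ih =>
    have hhalf : ε/2^(k+1) = (ε/2^k)/2 := by
      rw [div_eq_mul_inv, div_eq_mul_inv, div_eq_mul_inv, pow_succ,
        ENNReal.mul_inv (Or.inl (by positivity)) (Or.inl (by simp)), mul_assoc]
    calc (∑ i ∈ Finset.range (k+1), ε / 2^(i+1)) + ε / 2^(k+1)
        = (∑ i ∈ Finset.range k, ε / 2^(i+1)) + (ε / 2^(k+1) + ε / 2^(k+1)) := by
          rw [Finset.sum_range_succ]; ring
      _ = (∑ i ∈ Finset.range k, ε / 2^(i+1)) + ε / 2^k := by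
          rw [hhalf, ENNReal.add_halves]
      _ = ε := ih

lemma geom_sum_le (ε : ℝ≥0∞) (k : ℕ) : (∑ i ∈ Finset.range k, ε / 2^(i+1)) ≤ ε :=
  le_of_add_le_left (le_of_eq (geom_tail_sum ε k))

/-- Choquet capacitability: an analytic set can be approximated from inside, in capacity,
by a decreasing intersection of paving elements. -/
lemma choquet {X : Set (Ω × ℝ≥0)} (hX : AnPav 𝔽 X) {ε : ℝ≥0∞} (hε : 0 < ε) :
    ∃ K : Set (Ω × ℝ≥0), IsPavD 𝔽 K ∧ K ⊆ X ∧ capI P X ≤ capI P K + ε := by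
  classical
  obtain ⟨C, h1, h2, h3, rfl⟩ := hX
  have hchain : ∀ (f : ℕ → ℕ) {a b : ℕ}, a ≤ b → C f b ⊆ C f a := by
    intro f a b hab
    induction hab with
    | refl => exact subset_rfl
    | step _ ih => exact (h3 _ _).trans ih
  set Y : (ℕ → ℕ) → ℕ → Set (Ω × ℝ≥0) :=
    fun g k => ⋃ f ∈ {f : ℕ → ℕ | ∀ i, i < k → f i ≤ g i}, ⋂ n, C f n with hYdef
  have hY0 : ∀ g, Y g 0 = ⋃ f : ℕ → ℕ, ⋂ n, C f n := by
    intro g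
    ext x
    simp only [hYdef, mem_iUnion, mem_setOf_eq]
    constructor
    · rintro ⟨f, _, hf⟩; exact ⟨f, hf⟩
    · rintro ⟨f, hf⟩; exact ⟨f, fun i hi => absurd hi (Nat.not_lt_zero i), hf⟩
  have hYsup : ∀ g k, Y g k = ⋃ j : ℕ, Y (Function.update g k j) (k+1) := by
    intro g k
    ext x
    simp only [hYdef, mem_iUnion, mem_setOf_eq]
    constructor
    · rintro ⟨f, hfb, hf⟩
      refine ⟨f k, f, fun i hi => ?_, hf⟩
      rcases Nat.lt_succ_iff_lt_or_eq.1 hi with hik | rfl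
      · rw [Function.update_of_ne (Nat.ne_of_lt hik)]
        exact hfb i hik
      · rw [Function.update_self]
    · rintro ⟨j, f, hfb, hf⟩
      refine ⟨f, fun i hi => ?_, hf⟩
      have := hfb i (Nat.lt_succ_of_lt hi)
      rwa [Function.update_of_ne (Nat.ne_of_lt hi)] at this
  have hYmono : ∀ g k, Monotone fun j => Y (Function.update g k j) (k+1) := by
    intro g k j j' hj x hx
    simp only [hYdef, mem_iUnion, mem_setOf_eq] at hx ⊢
    obtain ⟨f, hfb, hf⟩ := hx
    refine ⟨f, fun i hi => ?_, hf⟩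
    rcases Nat.lt_succ_iff_lt_or_eq.1 hi with hik | rfl
    · rw [Function.update_of_ne (Nat.ne_of_lt hik)]
      have := hfb i hi
      rwa [Function.update_of_ne (Nat.ne_of_lt hik)] at this
    · rw [Function.update_self]
      have := hfb i (Nat.lt_succ_self i)
      rw [Function.update_self] at this
      exact this.trans hj
  -- one-step choice
  have hstep : ∀ (g : ℕ → ℕ) (k : ℕ), ∃ j : ℕ,
      capI P (Y g k) ≤ capI P (Y (Function.update g k j) (k+1)) + ε / 2^(k+1) := by
    intro g k
    by_cases h0 : capI P (Y g k) = 0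
    · exact ⟨0, by rw [h0]; exact zero_le⟩
    by_contra hcon
    push_neg at hcon
    have hsup : capI P (Y g k) = ⨆ j, capI P (Y (Function.update g k j) (k+1)) := by
      rw [hYsup g k]
      exact capI_iUnion_monotone (hYmono g k)
    have hub : ∀ j, capI P (Y (Function.update g k j) (k+1))
        ≤ capI P (Y g k) - ε / 2^(k+1) := by
      intro j
      have hlt : capI P (Y (Function.update g k j) (k+1)) + ε / 2^(k+1)
          < capI P (Y g k) := hcon j
      have hepne : ε / 2^(k+1) ≠ ⊤ := ne_top_of_lt (lt_of_le_of_lt le_add_self hlt)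
      exact ENNReal.le_sub_of_add_le_right hepne hlt.le
    have hA : (⨆ j, capI P (Y (Function.update g k j) (k+1)))
        ≤ capI P (Y g k) - ε / 2^(k+1) := iSup_le hub
    rw [← hsup] at hA
    have : capI P (Y g k) ≤ capI P (Y g k) - ε / 2^(k+1) := hA
    have hlt2 : capI P (Y g k) - ε / 2^(k+1) < capI P (Y g k) :=
      ENNReal.sub_lt_self capI_ne_top h0
        (ENNReal.div_pos hε.ne' (ENNReal.pow_ne_top (by simp))).ne'
    exact absurd this (not_le.2 hlt2)
  choose jc hjc using hstep
  set G : ℕ → (ℕ → ℕ) :=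
    fun k => Nat.rec (motive := fun _ => ℕ → ℕ) (fun _ => 0)
      (fun k gk => Function.update gk k (jc gk k)) k with hGdef
  have hGsucc : ∀ k, G (k+1) = Function.update (G k) k (jc (G k) k) := fun k => rfl
  set m : ℕ → ℕ := fun k => G (k+1) k with hmdef
  have hGstable : ∀ k i, i < k → G k i = G (i+1) i := by
    intro k
    induction k with
    | zero => intro i hi; exact absurd hi (Nat.not_lt_zero i)
    | succ k ih =>
      intro i hi
      rcases Nat.lt_succ_iff_lt_or_eq.1 hi with hik | rfl
      · rw [hGsucc k, Function.update_of_ne (Nat.ne_of_lt hik)]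
        exact ih i hik
      · rfl
  have hGm : ∀ k i, i ≤ k → G (k+1) i = m i := by
    intro k i hi
    exact hGstable (k+1) i (Nat.lt_succ_of_le hi)
  have hInv : ∀ k, capI P (⋃ f : ℕ → ℕ, ⋂ n, C f n)
      ≤ capI P (Y (G k) k) + ∑ i ∈ Finset.range k, ε / 2^(i+1) := by
    intro k
    induction k with
    | zero =>
      rw [hY0]
      simp
    | succ k ih =>
      calc capI P (⋃ f : ℕ → ℕ, ⋂ n, C f n)
          ≤ capI P (Y (G k) k) + ∑ i ∈ Finset.range k, ε / 2^(i+1) := ih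
        _ ≤ (capI P (Y (G (k+1)) (k+1)) + ε / 2^(k+1))
            + ∑ i ∈ Finset.range k, ε / 2^(i+1) := by
            refine add_le_add_left ?_ _
            rw [hGsucc k]
            exact hjc (G k) k
        _ = capI P (Y (G (k+1)) (k+1)) + ∑ i ∈ Finset.range (k+1), ε / 2^(i+1) := by
            rw [Finset.sum_range_succ]; ring
  -- the decreasing sequence of paving elements
  set L : ℕ → Set (Ω × ℝ≥0) :=
    fun k => ⋃ f ∈ {f : ℕ → ℕ | ∀ i, i ≤ k → f i ≤ m i}, C f k with hLdef
  have hLpav : ∀ k, IsPav 𝔽 (L k) := by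
    intro k
    have hre : L k = ⋃ v ∈ (Finset.univ : Finset (∀ i : Fin (k+1), Fin (m i + 1))),
        C (fun i => if h : i < k+1 then (v ⟨i, h⟩ : ℕ) else 0) k := by
      ext x
      simp only [hLdef, mem_iUnion, mem_setOf_eq, Finset.mem_univ, true_and,
        exists_true_left, exists_prop]
      constructor
      · rintro ⟨f, hfb, hf⟩
        refine ⟨fun i => ⟨f i, Nat.lt_succ_of_le (hfb i (Nat.lt_succ_iff.1 i.2))⟩, ?_⟩
        have : C (fun i => if h : i < k+1 then
            ((fun i : Fin (k+1) => (⟨f i, Nat.lt_succ_of_le (hfb i (Nat.lt_succ_iff.1 i.2))⟩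
              : Fin (m i + 1))) ⟨i, h⟩ : ℕ) else 0) k = C f k := by
          apply h2
          intro i hi
          rw [dif_pos (Nat.lt_succ_of_le hi)]
        rw [this]
        exact hf
      · rintro ⟨v, hv⟩
        refine ⟨_, fun i hi => ?_, hv⟩
        rw [dif_pos (Nat.lt_succ_of_le hi)]
        exact Nat.lt_succ_iff.1 (v ⟨i, Nat.lt_succ_of_le hi⟩).2
    rw [hre]
    exact isPav_biUnion_finset _ _ (fun v _ => h1 _ k)
  have hLdec : ∀ k, L (k+1) ⊆ L k := by
    intro k x hx
    simp only [hLdef, mem_iUnion, mem_setOf_eq] at hx ⊢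
    obtain ⟨f, hfb, hf⟩ := hx
    exact ⟨f, fun i hi => hfb i (hi.trans (Nat.le_succ k)), h3 f k hf⟩
  have hYL : ∀ k, Y (G (k+1)) (k+1) ⊆ L k := by
    intro k x hx
    simp only [hYdef, hLdef, mem_iUnion, mem_setOf_eq] at hx ⊢
    obtain ⟨f, hfb, hf⟩ := hx
    refine ⟨f, fun i hi => ?_, mem_iInter.1 hf k⟩
    have := hfb i (Nat.lt_succ_of_le hi)
    rwa [hGm k i hi] at this
  refine ⟨⋂ k, L k, ⟨L, hLpav, hLdec, rfl⟩, ?_, ?_⟩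
  · -- K ⊆ X via König's lemma
    intro x hx
    have hxL : ∀ k, ∃ f : ℕ → ℕ, (∀ i, i ≤ k → f i ≤ m i) ∧ x ∈ C f k := by
      intro k
      have := mem_iInter.1 hx k
      simp only [hLdef, mem_iUnion, mem_setOf_eq] at this
      obtain ⟨f, hfb, hf⟩ := this
      exact ⟨f, hfb, hf⟩
    set Ext : ℕ → (ℕ → ℕ) → Prop := fun k v => ∀ K', k ≤ K' → ∃ w : ℕ → ℕ,
      (∀ i, i < k → w i = v i) ∧ (∀ i, i ≤ K' → w i ≤ m i) ∧ x ∈ C w K' with hExt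
    have hbase : Ext 0 (fun _ => 0) := by
      intro K' _
      obtain ⟨f, hfb, hf⟩ := hxL K'
      exact ⟨f, fun i hi => absurd hi (Nat.not_lt_zero i), hfb, hf⟩
    have hstep2 : ∀ k (v : ℕ → ℕ), Ext k v →
        ∃ a : ℕ, Ext (k+1) (fun i => if i = k then a else v i) := by
      intro k v hv
      have hw : ∀ j : ℕ, ∃ w : ℕ → ℕ, (∀ i, i < k → w i = v i) ∧
          (∀ i, i ≤ k+1+j → w i ≤ m i) ∧ x ∈ C w (k+1+j) :=
        fun j => hv (k+1+j) (by omega)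
      choose w hw1 hw2 hw3 using hw
      have hφb : ∀ j, w j k < m k + 1 :=
        fun j => Nat.lt_succ_of_le (hw2 j k (by omega))
      obtain ⟨a0, ha0⟩ := Finite.exists_infinite_fiber
        (fun j => (⟨w j k, hφb j⟩ : Fin (m k + 1)))
      have hinf : ((fun j => (⟨w j k, hφb j⟩ : Fin (m k + 1))) ⁻¹' {a0}).Infinite :=
        Set.infinite_coe_iff.1 ha0
      refine ⟨(a0 : ℕ), ?_⟩
      intro K' hK'
      obtain ⟨j, hjmem, hjgt⟩ := hinf.exists_gt K'
      have hwk : w j k = (a0 : ℕ) := by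
        have : (⟨w j k, hφb j⟩ : Fin (m k + 1)) = a0 := hjmem
        exact congrArg Fin.val this
      refine ⟨w j, ?_, ?_, ?_⟩
      · intro i hi
        show w j i = if i = k then (a0 : ℕ) else v i
        rcases Nat.lt_succ_iff_lt_or_eq.1 hi with hik | rfl
        · rw [if_neg (Nat.ne_of_lt hik)]
          exact hw1 j i hik
        · rw [if_pos rfl]
          exact hwk
      · intro i hi
        exact hw2 j i (by omega)
      · exact hchain (w j) (by omega) (hw3 j)
    choose! astep hastep using hstep2
    set vs : ℕ → (ℕ → ℕ) :=
      fun k => Nat.rec (motive := fun _ => ℕ → ℕ) (fun _ => 0)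
        (fun k vk => fun i => if i = k then astep k vk else vk i) k with hvsdef
    have hvs : ∀ k, Ext k (vs k) := by
      intro k
      induction k with
      | zero => exact hbase
      | succ k ih => exact hastep k (vs k) ih
    have hvss : ∀ k, vs (k+1) = fun i => if i = k then astep k (vs k) else vs k i :=
      fun k => rfl
    have hvstable : ∀ k i, i < k → vs k i = vs (i+1) i := by
      intro k
      induction k with
      | zero => intro i hi; exact absurd hi (Nat.not_lt_zero i)
      | succ k ih =>
        intro i hi
        rcases Nat.lt_succ_iff_lt_or_eq.1 hi with hik | rfl
        · have h7 : vs (k+1) i = vs k i := by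
            rw [hvss k]
            simp only [if_neg (Nat.ne_of_lt hik)]
          rw [h7]
          exact ih i hik
        · rfl
    set fI : ℕ → ℕ := fun i => vs (i+1) i with hfinf
    refine mem_iUnion.2 ⟨fI, mem_iInter.2 fun n => ?_⟩
    obtain ⟨ww, hpre, _, hxw⟩ := hvs (n+1) (n+1) le_rfl
    have hCeq : C ww n = C fI n := by
      apply h2
      intro i hi
      have h5 : ww i = vs (n+1) i := hpre i (Nat.lt_succ_of_le hi)
      have h6 : vs (n+1) i = vs (i+1) i := hvstable (n+1) i (Nat.lt_succ_of_le hi)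
      rw [h5, h6]
    rw [← hCeq]
    exact hchain ww (Nat.le_succ n) hxw
  · -- capacity bound
    have hLbound : ∀ k, capI P (⋃ f : ℕ → ℕ, ⋂ n, C f n) ≤ capI P (L k) + ε := by
      intro k
      calc capI P (⋃ f : ℕ → ℕ, ⋂ n, C f n)
          ≤ capI P (Y (G (k+1)) (k+1)) + ∑ i ∈ Finset.range (k+1), ε / 2^(i+1) :=
            hInv (k+1)
        _ ≤ capI P (L k) + ε :=
            add_le_add (capI_mono (hYL k)) (geom_sum_le ε (k+1))
    have hKeq : capI P (⋂ k, L k) = ⨅ k, capI P (L k) := capI_iInter_pav hLpav hLdec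
    rw [hKeq, ENNReal.iInf_add]
    exact le_iInf fun k => hLbound k



/-! ### The smallest class containing a base and closed under countable unions and
intersections -/

inductive SC (B : Set (Set (Ω × ℝ≥0))) : Set (Ω × ℝ≥0) → Prop
  | base {s : Set (Ω × ℝ≥0)} (h : s ∈ B) : SC B s
  | sUnion (f : ℕ → Set (Ω × ℝ≥0)) (h : ∀ n, SC B (f n)) : SC B (⋃ n, f n)
  | sInter (f : ℕ → Set (Ω × ℝ≥0)) (h : ∀ n, SC B (f n)) : SC B (⋂ n, f n)

lemma SC.anPav {B : Set (Set (Ω × ℝ≥0))} (hbase : ∀ s ∈ B, AnPav 𝔽 s) :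
    ∀ {s : Set (Ω × ℝ≥0)}, SC B s → AnPav 𝔽 s := by
  intro s hs
  induction hs with
  | base h => exact hbase _ h
  | sUnion f h ih => exact anPav_iUnion ih
  | sInter f h ih => exact anPav_iInter ih

lemma sc_of_generateFrom {B : Set (Set (Ω × ℝ≥0))} {G : Set (Set (Ω × ℝ≥0))}
    (hG : ∀ s ∈ G, SC B s ∧ SC B sᶜ)
    (hempty : SC B ∅) (huniv : SC B univ) :
    ∀ A, MeasurableSet[MeasurableSpace.generateFrom G] A → SC B A ∧ SC B Aᶜ := by
  intro A hA
  refine MeasurableSpace.generateFrom_induction G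
    (fun s _ => SC B s ∧ SC B sᶜ) (fun t ht _ => hG t ht) ?_ ?_ ?_ A hA
  · constructor
    · exact hempty
    · rw [compl_empty]; exact huniv
  · rintro t _ ⟨h1, h2⟩
    exact ⟨h2, by rwa [compl_compl]⟩
  · intro s _ hs
    constructor
    · exact SC.sUnion s (fun n => (hs n).1)
    · rw [compl_iUnion]
      exact SC.sInter _ (fun n => (hs n).2)


end AST


/-- Accessible Section Theorem: for every accessible set `A` and
`ε > 0` there is an accessible time `τ` with graph inside `A` and
`ℙ*(π_Ω(A)) − ℙ({τ < ∞}) ≤ ε`. -/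
theorem accessible_section {Ω : Type*} {F : MeasurableSpace Ω}
    (𝔽 : Filtration ℝ≥0 F) (P : Measure Ω) [IsProbabilityMeasure P]
    (A : Set (Ω × ℝ≥0)) (hA : MeasurableSet[accessibleSigma 𝔽] A)
    (ε : ℝ≥0∞) (hε : 0 < ε) :
    ∃ τ : Ω → ℝ≥0∞, IsAccessibleTime 𝔽 τ ∧ graph τ ⊆ A ∧
      pstar P (projOmega A) - P {ω | τ ω < ⊤} ≤ ε := by
  classical
  set B : Set (Set (Ω × ℝ≥0)) := {s | (∃ τ, IsAccessibleTime 𝔽 τ ∧ s = rayFrom τ) ∨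
    (∃ τ, IsAccessibleTime 𝔽 τ ∧ s = (rayFrom τ)ᶜ)} with hB
  have hetop : (∅ : Set (Ω × ℝ≥0)) = rayFrom (fun _ => (⊤:ℝ≥0∞)) := by
    ext ⟨ω, s⟩
    simp only [rayFrom, mem_setOf_eq, mem_empty_iff_false, false_iff, not_le]
    exact ENNReal.coe_lt_top
  have hsc : AST.SC B A ∧ AST.SC B Aᶜ := by
    refine AST.sc_of_generateFrom ?_ ?_ ?_ A hA
    · rintro s ⟨τ, hτ, rfl⟩
      exact ⟨AST.SC.base (Or.inl ⟨τ, hτ, rfl⟩), AST.SC.base (Or.inr ⟨τ, hτ, rfl⟩)⟩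
    · rw [hetop]
      exact AST.SC.base (Or.inl ⟨_, AST.isAcc_top, rfl⟩)
    · have he : (univ : Set (Ω × ℝ≥0)) = (rayFrom (fun _ => (⊤:ℝ≥0∞)))ᶜ := by
        rw [← hetop, compl_empty]
      rw [he]
      exact AST.SC.base (Or.inr ⟨_, AST.isAcc_top, rfl⟩)
  have han : AST.AnPav 𝔽 A := by
    refine AST.SC.anPav ?_ hsc.1
    rintro s (⟨τ, hτ, rfl⟩ | ⟨τ, hτ, rfl⟩)
    · exact AST.anPav_ray hτ
    · rw [AST.compl_rayFrom]
      exact AST.anPav_coRay_acc hτ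
  obtain ⟨K, hKpavD, hKA, hcap⟩ := AST.choquet (P := P) han hε
  obtain ⟨S, hpav, hdec, rfl⟩ := hKpavD
  have hexpl := AST.pavD_section_expl S hpav hdec
  refine ⟨fun ω => ⨆ n, debut (S n) ω, hexpl.1, (hexpl.2.1).trans hKA, ?_⟩
  have hpstar : pstar P (projOmega A) = P (projOmega A) := (measure_eq_iInf _).symm
  have hPd : P {ω | (⨆ n, debut (S n) ω) < ⊤} = AST.capI P (⋂ n, S n) := by
    unfold AST.capI
    rw [hexpl.2.2.1]
  rw [hpstar, tsub_le_iff_right]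
  calc P (projOmega A) = AST.capI P A := rfl
    _ ≤ AST.capI P (⋂ n, S n) + ε := hcap
    _ = P {ω | (⨆ n, debut (S n) ω) < ⊤} + ε := by rw [hPd]
    _ = ε + P {ω | (⨆ n, debut (S n) ω) < ⊤} := add_comm _ _
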